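/- arXiv:1212.3314 — 6 statements merged into one kernel-verified Lean document; each statement's English description precedes it below -/
import Mathlib

section
/- Let x : ℝ^m → ℝ^N be a smooth function. Suppose that for every smooth regular curve Γ : [0,1] → ℝ^m (with Γ′(s) ≠ 0 for all s) and every smooth variation δx : ℝ^m → ℝ^N that vanishes on a neighbourhood of the endpoints Γ(0) and Γ(1), the first variation satisfies d/dε|_{ε=0} S_Γ(x + ε δx) = 0. Then x satisfies the multi-time Euler–Lagrange equations: (i) for all 1 ≤ α ≠ β ≤ m, ∂L_α/∂v_β(x, x_{t_1}, …, x_{t_m}) = 0; (ii) the functions ∂L_α/∂v_α(x, x_{t_1}, …, x_{t_m}) coincide for all α = 1, …, m, with common value a function p : ℝ^m → ℝ^N; (iii) ∂p/∂t_α = ∂L_α/∂x(x, x_{t_1}, …, x_{t_m}) for all α. -/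
noncomputable section

/-- Partial derivative `x_{t_α}` of a multi-time function. -/
def pdv {m N : ℕ} (x : (Fin m → ℝ) → (Fin N → ℝ)) (α : Fin m) (t : Fin m → ℝ) :
    Fin N → ℝ :=
  fderiv ℝ x t (Pi.single α 1)

/-- The first jet `(x_{t_1}, …, x_{t_m})` of a multi-time function. -/
def jet {m N : ℕ} (x : (Fin m → ℝ) → (Fin N → ℝ)) (t : Fin m → ℝ) :
    Fin m → Fin N → ℝ :=
  fun β => pdv x β t

/-- Gradient `∂L/∂x` of a Lagrangian `L(x, v_1, …, v_m)` in the `x`-slot. -/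
def gradX {m N : ℕ} (L : (Fin N → ℝ) → (Fin m → (Fin N → ℝ)) → ℝ)
    (a : Fin N → ℝ) (V : Fin m → (Fin N → ℝ)) : Fin N → ℝ :=
  fun j => fderiv ℝ (fun a' => L a' V) a (Pi.single j 1)

/-- Gradient `∂L/∂v_β` of a Lagrangian `L(x, v_1, …, v_m)` in the `v_β`-slot. -/
def gradV {m N : ℕ} (L : (Fin N → ℝ) → (Fin m → (Fin N → ℝ)) → ℝ)
    (β : Fin m) (a : Fin N → ℝ) (V : Fin m → (Fin N → ℝ)) : Fin N → ℝ :=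
  fun j => fderiv ℝ (fun w => L a (Function.update V β w)) (V β) (Pi.single j 1)

/-- Action `S_Γ(x) = ∫₀¹ Σ_α L_α(x(Γ(s)), x_{t_1}(Γ(s)), …, x_{t_m}(Γ(s))) Γ_α'(s) ds`. -/
def action {m N : ℕ} (L : Fin m → (Fin N → ℝ) → (Fin m → (Fin N → ℝ)) → ℝ)
    (x : (Fin m → ℝ) → (Fin N → ℝ)) (Γ : ℝ → (Fin m → ℝ)) : ℝ :=
  ∫ s in (0:ℝ)..1, ∑ α, L α (x (Γ s)) (jet x (Γ s)) * deriv Γ s α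

namespace MTEL

open ContinuousLinearMap MeasureTheory Set intervalIntegral

variable {m N : ℕ}

/-- continuous linear single -/
def sgl (β : Fin m) : (Fin N → ℝ) →L[ℝ] (Fin m → Fin N → ℝ) :=
  ContinuousLinearMap.pi (fun i => if i = β then ContinuousLinearMap.id ℝ _ else 0)

lemma sgl_apply (β : Fin m) (w : Fin N → ℝ) : sgl β w = Pi.single β w := by
  funext i
  simp [sgl, ContinuousLinearMap.pi_apply, Pi.single_apply]
  split <;> simp

lemma update_decomp (V : Fin m → Fin N → ℝ) (β : Fin m) (w : Fin N → ℝ) :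
    Function.update V β w = Function.update V β 0 + Pi.single β w := by
  funext i
  by_cases h : i = β
  · subst h; simp
  · simp [Function.update_of_ne h, Pi.single_eq_of_ne h]

lemma gradV_eq (L : (Fin N → ℝ) → (Fin m → (Fin N → ℝ)) → ℝ)
    (hL : ContDiff ℝ (⊤ : ℕ∞) (fun q : (Fin N → ℝ) × (Fin m → (Fin N → ℝ)) => L q.1 q.2))
    (β : Fin m) (a : Fin N → ℝ) (V : Fin m → (Fin N → ℝ)) (j : Fin N) :
    gradV L β a V j
      = fderiv ℝ (fun q : (Fin N → ℝ) × (Fin m → (Fin N → ℝ)) => L q.1 q.2) (a, V)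
          (0, Pi.single β (Pi.single j 1)) := by
  set Lf := fun q : (Fin N → ℝ) × (Fin m → (Fin N → ℝ)) => L q.1 q.2 with hLf
  have hg : HasFDerivAt (fun w : Fin N → ℝ => ((a, Function.update V β w) :
      (Fin N → ℝ) × (Fin m → (Fin N → ℝ))))
      ((ContinuousLinearMap.inr ℝ (Fin N → ℝ) (Fin m → Fin N → ℝ)).comp (sgl β)) (V β) := by
    have : (fun w : Fin N → ℝ => ((a, Function.update V β w) :
        (Fin N → ℝ) × (Fin m → (Fin N → ℝ))))
        = fun w => ((a, Function.update V β 0) : _)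
            + ((ContinuousLinearMap.inr ℝ (Fin N → ℝ) (Fin m → Fin N → ℝ)).comp (sgl β)) w := by
      funext w
      simp [sgl_apply, Prod.ext_iff, update_decomp V β w]
    rw [this]
    exact ((((ContinuousLinearMap.inr ℝ (Fin N → ℝ) (Fin m → Fin N → ℝ)).comp
      (sgl β))).hasFDerivAt).const_add _
  have hD : HasFDerivAt Lf (fderiv ℝ Lf (a, V)) (a, Function.update V β (V β)) := by
    rw [Function.update_eq_self]
    exact (hL.differentiable (by simp) (a, V)).hasFDerivAt
  have hcomp : HasFDerivAt (fun w => Lf (a, Function.update V β w))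
      ((fderiv ℝ Lf (a, V)).comp ((ContinuousLinearMap.inr ℝ (Fin N → ℝ)
        (Fin m → Fin N → ℝ)).comp (sgl β))) (V β) := by have h := hD.comp (V β) hg; exact h
  have h2 : gradV L β a V j = fderiv ℝ (fun w => Lf (a, Function.update V β w)) (V β)
      (Pi.single j 1) := rfl
  rw [h2, hcomp.fderiv]
  simp [sgl_apply]

lemma gradX_eq (L : (Fin N → ℝ) → (Fin m → (Fin N → ℝ)) → ℝ)
    (hL : ContDiff ℝ (⊤ : ℕ∞) (fun q : (Fin N → ℝ) × (Fin m → (Fin N → ℝ)) => L q.1 q.2))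
    (a : Fin N → ℝ) (V : Fin m → (Fin N → ℝ)) (j : Fin N) :
    gradX L a V j
      = fderiv ℝ (fun q : (Fin N → ℝ) × (Fin m → (Fin N → ℝ)) => L q.1 q.2) (a, V)
          (Pi.single j 1, 0) := by
  set Lf := fun q : (Fin N → ℝ) × (Fin m → (Fin N → ℝ)) => L q.1 q.2 with hLf
  have hg : HasFDerivAt (fun a' : Fin N → ℝ => ((a', V) : _))
      (ContinuousLinearMap.inl ℝ (Fin N → ℝ) (Fin m → Fin N → ℝ)) a :=
    hasFDerivAt_prodMk_left a V
  have hD : HasFDerivAt Lf (fderiv ℝ Lf (a, V)) (a, V) :=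
    (hL.differentiable (by simp) (a, V)).hasFDerivAt
  have hcomp : HasFDerivAt (fun a' => Lf (a', V))
      ((fderiv ℝ Lf (a, V)).comp (ContinuousLinearMap.inl ℝ (Fin N → ℝ)
        (Fin m → Fin N → ℝ))) a := by have h := hD.comp a hg; exact h
  have h2 : gradX L a V j = fderiv ℝ (fun a' => Lf (a', V)) a (Pi.single j 1) := rfl
  rw [h2, hcomp.fderiv]
  rfl


lemma sum_single_smul (b : Fin N → ℝ) : ∑ j, b j • (Pi.single j 1 : Fin N → ℝ) = b := by
  have h : ∀ j : Fin N, b j • (Pi.single j 1 : Fin N → ℝ) = Pi.single j (b j) := by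
    intro j; rw [← Pi.single_smul, smul_eq_mul, mul_one]
  simp_rw [h]
  exact Finset.univ_sum_single b

lemma clm_pi_sum (T : (Fin N → ℝ) →L[ℝ] ℝ) (b : Fin N → ℝ) :
    T b = ∑ j, b j * T (Pi.single j 1) := by
  conv_lhs => rw [← sum_single_smul b]
  rw [map_sum]
  simp [smul_eq_mul]

lemma pair_decomp (D : ((Fin N → ℝ) × (Fin m → Fin N → ℝ)) →L[ℝ] ℝ)
    (b : Fin N → ℝ) (W : Fin m → Fin N → ℝ) :
    D (b, W) = (∑ j, b j * D (Pi.single j 1, 0))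
      + ∑ β, ∑ j, W β j * D (0, Pi.single β (Pi.single j 1)) := by
  have hsplit : ((b, W) : (Fin N → ℝ) × (Fin m → Fin N → ℝ)) = (b, 0) + (0, W) := by simp
  rw [hsplit, map_add]
  congr 1
  · have : D (b, 0) = (D.comp (ContinuousLinearMap.inl ℝ _ _)) b := rfl
    rw [this, clm_pi_sum]
    rfl
  · have h1 : D (0, W) = (D.comp (ContinuousLinearMap.inr ℝ _ _)) W := rfl
    rw [h1]
    have hW : W = ∑ β, Pi.single β (W β) := (Finset.univ_sum_single W).symm
    conv_lhs => rw [hW]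
    rw [map_sum]
    refine Finset.sum_congr rfl fun β _ => ?_
    have h2 : (D.comp (ContinuousLinearMap.inr ℝ _ _)) (Pi.single β (W β))
        = ((D.comp (ContinuousLinearMap.inr ℝ _ _)).comp (sgl β)) (W β) := by
      simp [sgl_apply]
    rw [h2, clm_pi_sum]
    refine Finset.sum_congr rfl fun j _ => ?_
    simp [sgl_apply]




/-- Fundamental lemma of the calculus of variations on (0,1), continuous version. -/
lemma fund_lemma (f : ℝ → ℝ) (hf : Continuous f)
    (H : ∀ g : ℝ → ℝ, ContDiff ℝ (⊤ : ℕ∞) g → HasCompactSupport g →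
      tsupport g ⊆ Set.Ioo (0:ℝ) 1 → ∫ s in (0:ℝ)..1, f s * g s = 0) :
    ∀ s ∈ Set.Ioo (0:ℝ) 1, f s = 0 := by
  have hae : ∀ᵐ s ∂(volume : Measure ℝ), s ∈ Set.Ioo (0:ℝ) 1 → f s = 0 := by
    apply isOpen_Ioo.ae_eq_zero_of_integral_contDiff_smul_eq_zero
      (hf.locallyIntegrable.locallyIntegrableOn _)
    intro g hg hgc hgs
    have h1 : ∫ s, g s • f s = ∫ s in Set.Ioo (0:ℝ) 1, g s • f s := by
      refine (setIntegral_eq_integral_of_forall_compl_eq_zero fun s hs => ?_).symm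
      have : g s = 0 := image_eq_zero_of_notMem_tsupport (fun h => hs (hgs h))
      simp [this]
    rw [h1, ← integral_Ioc_eq_integral_Ioo, ← intervalIntegral.integral_of_le zero_le_one]
    have := H g hg hgc hgs
    simpa [smul_eq_mul, mul_comm] using this
  -- upgrade to pointwise using continuity
  intro s hs
  by_contra hne
  have hopen : IsOpen {t | t ∈ Set.Ioo (0:ℝ) 1 ∧ f t ≠ 0} :=
    (isOpen_Ioo.inter (isOpen_ne_fun hf continuous_const))
  have hpos : 0 < volume {t | t ∈ Set.Ioo (0:ℝ) 1 ∧ f t ≠ 0} :=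
    hopen.measure_pos volume ⟨s, hs, hne⟩
  have hzero : volume {t | t ∈ Set.Ioo (0:ℝ) 1 ∧ f t ≠ 0} = 0 := by
    rw [ae_iff] at hae
    refine measure_mono_null (fun t ht => ?_) hae
    simp only [Set.mem_setOf_eq] at ht ⊢
    tauto
  exact absurd hzero hpos.ne'

/-- Differentiation under the interval integral for nice integrands. -/
lemma deriv_under_integral (H H' : ℝ → ℝ → ℝ)
    (hH : Continuous fun p : ℝ × ℝ => H p.1 p.2)
    (hH' : Continuous fun p : ℝ × ℝ => H' p.1 p.2)
    (hd : ∀ ε s, HasDerivAt (fun e => H e s) (H' ε s) ε) :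
    HasDerivAt (fun ε => ∫ s in (0:ℝ)..1, H ε s) (∫ s in (0:ℝ)..1, H' 0 s) 0 := by
  obtain ⟨C, hC⟩ := (isCompact_Icc.prod isCompact_Icc).exists_bound_of_continuousOn
    (hH'.continuousOn (s := Set.Icc (-1:ℝ) 1 ×ˢ Set.Icc (0:ℝ) 1))
  have key := intervalIntegral.hasDerivAt_integral_of_dominated_loc_of_deriv_le
    (F := H) (F' := H') (x₀ := (0:ℝ)) (a := 0) (b := 1) (bound := fun _ => C)
    (μ := volume) (Metric.ball_mem_nhds 0 zero_lt_one)
    (Filter.Eventually.of_forall fun ε =>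
      ((hH.comp (Continuous.prodMk_right ε)).aestronglyMeasurable))
    ((hH.comp (Continuous.prodMk_right 0)).intervalIntegrable 0 1)
    ((hH'.comp (Continuous.prodMk_right 0)).aestronglyMeasurable)
    (Filter.Eventually.of_forall fun s hs ε hε => ?_)
    (intervalIntegrable_const)
    (Filter.Eventually.of_forall fun s _ ε _ => hd ε s)
  · exact key.2
  · refine hC (ε, s) ⟨?_, ?_⟩
    · have := Metric.mem_ball.mp hε
      simp only [Real.dist_eq, sub_zero] at this
      exact Set.mem_Icc.mpr (abs_le.mp this.le)
    · rw [Set.uIoc_of_le zero_le_one] at hs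
      exact Set.mem_Icc.mpr ⟨hs.1.le, hs.2⟩


section Master

variable {m N : ℕ}

lemma jet_contDiff {x : (Fin m → ℝ) → (Fin N → ℝ)} (hx : ContDiff ℝ (⊤:ℕ∞) x) :
    ContDiff ℝ (⊤:ℕ∞) (jet x) := by
  have hfd : ContDiff ℝ (⊤:ℕ∞) (fderiv ℝ x) := hx.fderiv_right le_rfl
  apply contDiff_pi.mpr
  intro β
  exact hfd.clm_apply contDiff_const

lemma jet_add_smul {x δx : (Fin m → ℝ) → (Fin N → ℝ)}
    (hx : ContDiff ℝ (⊤:ℕ∞) x) (hδ : ContDiff ℝ (⊤:ℕ∞) δx) (ε : ℝ) (t : Fin m → ℝ) :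
    jet (fun t => x t + ε • δx t) t = jet x t + ε • jet δx t := by
  funext β
  show pdv _ β t = _
  unfold pdv
  have hxd : DifferentiableAt ℝ x t := (hx.differentiable (by simp)).differentiableAt
  have hδd : DifferentiableAt ℝ δx t := (hδ.differentiable (by simp)).differentiableAt
  rw [fderiv_fun_add (g := fun y => ε • δx y) hxd (hδd.const_smul ε), fderiv_fun_const_smul hδd]
  funext j
  simp [jet, pdv]

lemma master
    (L : Fin m → (Fin N → ℝ) → (Fin m → (Fin N → ℝ)) → ℝ)
    (hL : ∀ α, ContDiff ℝ (⊤ : ℕ∞)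
      (fun q : (Fin N → ℝ) × (Fin m → (Fin N → ℝ)) => L α q.1 q.2))
    (x : (Fin m → ℝ) → (Fin N → ℝ)) (hx : ContDiff ℝ (⊤ : ℕ∞) x)
    (hcrit : ∀ Γ : ℝ → (Fin m → ℝ), ContDiff ℝ (⊤ : ℕ∞) Γ →
      (∀ s ∈ Set.Icc (0:ℝ) 1, deriv Γ s ≠ 0) →
      ∀ δx : (Fin m → ℝ) → (Fin N → ℝ), ContDiff ℝ (⊤ : ℕ∞) δx →
        (∀ᶠ t in nhds (Γ 0), δx t = 0) → (∀ᶠ t in nhds (Γ 1), δx t = 0) →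
        deriv (fun ε : ℝ => action L (fun t => x t + ε • δx t) Γ) 0 = 0)
    (t0 v : Fin m → ℝ) (hv : v ≠ 0)
    (δx : (Fin m → ℝ) → (Fin N → ℝ)) (hδ : ContDiff ℝ (⊤:ℕ∞) δx)
    (h0 : ∀ᶠ t in nhds t0, δx t = 0) (h1 : ∀ᶠ t in nhds (t0 + v), δx t = 0) :
    ∫ s in (0:ℝ)..1, ∑ α, (fderiv ℝ (fun q : (Fin N → ℝ) × (Fin m → (Fin N → ℝ)) => L α q.1 q.2)
        (x (t0 + s • v), jet x (t0 + s • v)) (δx (t0 + s • v), jet δx (t0 + s • v))) * v α = 0 := by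
  classical
  set Γ : ℝ → Fin m → ℝ := fun s => t0 + s • v with hΓdef
  have hΓsm : ContDiff ℝ (⊤:ℕ∞) Γ := contDiff_const.add (contDiff_id.smul contDiff_const)
  have hΓd : ∀ s : ℝ, HasDerivAt Γ v s := by
    intro s
    have := ((hasDerivAt_id s).smul_const v).const_add t0
    show HasDerivAt (fun s : ℝ => t0 + s • v) v s
    simpa using this
  have hΓderiv : ∀ s, deriv Γ s = v := fun s => (hΓd s).deriv
  have hΓreg : ∀ s ∈ Set.Icc (0:ℝ) 1, deriv Γ s ≠ 0 := by
    intro s _; rw [hΓderiv]; exact hv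
  have hΓ0 : Γ 0 = t0 := by simp [hΓdef]
  have hΓ1 : Γ 1 = t0 + v := by simp [hΓdef]
  set u : (Fin m → ℝ) → (Fin N → ℝ) × (Fin m → Fin N → ℝ) := fun t => (x t, jet x t) with hu_def
  set w : (Fin m → ℝ) → (Fin N → ℝ) × (Fin m → Fin N → ℝ) := fun t => (δx t, jet δx t) with hw_def
  have hu : ContDiff ℝ (⊤:ℕ∞) u := hx.prodMk (jet_contDiff hx)
  have hw : ContDiff ℝ (⊤:ℕ∞) w := hδ.prodMk (jet_contDiff hδ)
  set H : ℝ → ℝ → ℝ := fun ε s =>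
    ∑ α, (fun q : (Fin N → ℝ) × (Fin m → (Fin N → ℝ)) => L α q.1 q.2)
      (u (Γ s) + ε • w (Γ s)) * v α with hH_def
  set H' : ℝ → ℝ → ℝ := fun ε s =>
    ∑ α, (fderiv ℝ (fun q : (Fin N → ℝ) × (Fin m → (Fin N → ℝ)) => L α q.1 q.2)
      (u (Γ s) + ε • w (Γ s)) (w (Γ s))) * v α with hH'_def
  have hφ : Continuous fun p : ℝ × ℝ => u (Γ p.2) + p.1 • w (Γ p.2) := by
    have h1 : Continuous fun p : ℝ × ℝ => u (Γ p.2) :=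
      (hu.continuous.comp hΓsm.continuous).comp continuous_snd
    have h2 : Continuous fun p : ℝ × ℝ => w (Γ p.2) :=
      (hw.continuous.comp hΓsm.continuous).comp continuous_snd
    exact h1.add (continuous_fst.smul h2)
  have hHc : Continuous fun p : ℝ × ℝ => H p.1 p.2 := by
    apply continuous_finset_sum
    intro α _
    exact (((hL α).continuous).comp hφ).mul continuous_const
  have hH'c : Continuous fun p : ℝ × ℝ => H' p.1 p.2 := by
    apply continuous_finset_sum
    intro α _
    have hfc : Continuous (fderiv ℝ (fun q : (Fin N → ℝ) × (Fin m → (Fin N → ℝ)) =>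
        L α q.1 q.2)) := (hL α).continuous_fderiv (by simp)
    have h2 : Continuous fun p : ℝ × ℝ => w (Γ p.2) :=
      (hw.continuous.comp hΓsm.continuous).comp continuous_snd
    exact ((hfc.comp hφ).clm_apply h2).mul continuous_const
  have hd : ∀ ε s, HasDerivAt (fun e => H e s) (H' ε s) ε := by
    intro ε s
    apply HasDerivAt.fun_sum
    intro α _
    have hin : HasDerivAt (fun e : ℝ => u (Γ s) + e • w (Γ s)) (w (Γ s)) ε := by
      have := ((hasDerivAt_id ε).smul_const (w (Γ s))).const_add (u (Γ s))
      simpa using this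
    have hftot : HasFDerivAt (fun q : (Fin N → ℝ) × (Fin m → (Fin N → ℝ)) => L α q.1 q.2)
        (fderiv ℝ (fun q : (Fin N → ℝ) × (Fin m → (Fin N → ℝ)) => L α q.1 q.2)
          (u (Γ s) + ε • w (Γ s))) (u (Γ s) + ε • w (Γ s)) :=
      (((hL α).differentiable (by simp)) _).hasFDerivAt
    exact (hftot.comp_hasDerivAt ε hin).mul_const (v α)
  have hact : ∀ ε : ℝ, action L (fun t => x t + ε • δx t) Γ = ∫ s in (0:ℝ)..1, H ε s := by
    intro ε
    unfold action
    refine intervalIntegral.integral_congr fun s _ => ?_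
    rw [hΓderiv s]
    refine Finset.sum_congr rfl fun α _ => ?_
    rw [jet_add_smul hx hδ ε (Γ s)]
    rfl
  have key := deriv_under_integral H H' hHc hH'c hd
  have hc : deriv (fun ε : ℝ => action L (fun t => x t + ε • δx t) Γ) 0 = 0 := by
    apply hcrit Γ hΓsm hΓreg δx hδ
    · rwa [hΓ0]
    · rwa [hΓ1]
  have heq : (fun ε : ℝ => action L (fun t => x t + ε • δx t) Γ)
      = fun ε => ∫ s in (0:ℝ)..1, H ε s := funext hact
  rw [heq] at hc
  rw [key.deriv] at hc
  refine Eq.trans ?_ hc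
  apply intervalIntegral.integral_congr
  intro s _
  refine Finset.sum_congr rfl fun α _ => ?_
  simp [hH'_def, hu_def, hw_def, hΓdef]

end Master

/-- pairing of `gradX` with a constant vector `c` -/
def Ax (L : (Fin N → ℝ) → (Fin m → (Fin N → ℝ)) → ℝ) (x : (Fin m → ℝ) → (Fin N → ℝ))
    (c : Fin N → ℝ) (t : Fin m → ℝ) : ℝ :=
  ∑ j, gradX L (x t) (jet x t) j * c j

/-- pairing of `gradV _ β` with a constant vector `c` -/
def Bv (L : (Fin N → ℝ) → (Fin m → (Fin N → ℝ)) → ℝ) (β : Fin m)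
    (x : (Fin m → ℝ) → (Fin N → ℝ)) (c : Fin N → ℝ) (t : Fin m → ℝ) : ℝ :=
  ∑ j, gradV L β (x t) (jet x t) j * c j

lemma jet_smul_const {ψ : (Fin m → ℝ) → ℝ} (hψ : ContDiff ℝ (⊤:ℕ∞) ψ) (c : Fin N → ℝ)
    (t : Fin m → ℝ) (β : Fin m) :
    jet (fun t => ψ t • c) t β = (fderiv ℝ ψ t (Pi.single β 1)) • c := by
  show pdv _ β t = _
  unfold pdv
  rw [fderiv_smul_const ((hψ.differentiable (by simp)).differentiableAt) c]
  simp

lemma master' {m N : ℕ}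
    (L : Fin m → (Fin N → ℝ) → (Fin m → (Fin N → ℝ)) → ℝ)
    (hL : ∀ α, ContDiff ℝ (⊤ : ℕ∞)
      (fun q : (Fin N → ℝ) × (Fin m → (Fin N → ℝ)) => L α q.1 q.2))
    (x : (Fin m → ℝ) → (Fin N → ℝ)) (hx : ContDiff ℝ (⊤ : ℕ∞) x)
    (hcrit : ∀ Γ : ℝ → (Fin m → ℝ), ContDiff ℝ (⊤ : ℕ∞) Γ →
      (∀ s ∈ Set.Icc (0:ℝ) 1, deriv Γ s ≠ 0) →
      ∀ δx : (Fin m → ℝ) → (Fin N → ℝ), ContDiff ℝ (⊤ : ℕ∞) δx →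
        (∀ᶠ t in nhds (Γ 0), δx t = 0) → (∀ᶠ t in nhds (Γ 1), δx t = 0) →
        deriv (fun ε : ℝ => action L (fun t => x t + ε • δx t) Γ) 0 = 0)
    (t0 v : Fin m → ℝ) (hv : v ≠ 0)
    (ψ : (Fin m → ℝ) → ℝ) (hψ : ContDiff ℝ (⊤:ℕ∞) ψ)
    (h0 : ∀ᶠ t in nhds t0, ψ t = 0) (h1 : ∀ᶠ t in nhds (t0 + v), ψ t = 0)
    (c : Fin N → ℝ) :
    ∫ s in (0:ℝ)..1, ∑ α, (Ax (L α) x c (t0 + s • v) * ψ (t0 + s • v)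
        + ∑ β, Bv (L α) β x c (t0 + s • v)
            * fderiv ℝ ψ (t0 + s • v) (Pi.single β 1)) * v α = 0 := by
  have hδ : ContDiff ℝ (⊤:ℕ∞) (fun t => ψ t • c) := hψ.smul contDiff_const
  have h0' : ∀ᶠ t in nhds t0, ψ t • c = 0 := h0.mono fun t ht => by rw [ht, zero_smul]
  have h1' : ∀ᶠ t in nhds (t0 + v), ψ t • c = 0 := h1.mono fun t ht => by rw [ht, zero_smul]
  have hm := master L hL x hx hcrit t0 v hv (fun t => ψ t • c) hδ h0' h1'
  refine Eq.trans ?_ hm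
  apply intervalIntegral.integral_congr
  intro s _
  refine Finset.sum_congr rfl fun α _ => ?_
  congr 1
  set t := t0 + s • v with ht
  set D := fderiv ℝ (fun q : (Fin N → ℝ) × (Fin m → (Fin N → ℝ)) => L α q.1 q.2)
      (x t, jet x t) with hD
  have hdec := pair_decomp D (ψ t • c) (jet (fun t => ψ t • c) t)
  rw [hdec]
  congr 1
  · unfold Ax
    rw [Finset.sum_mul]
    refine Finset.sum_congr rfl fun j _ => ?_
    rw [gradX_eq (L α) (hL α) (x t) (jet x t) j, ← hD]
    simp only [Pi.smul_apply, smul_eq_mul]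
    ring
  · refine Finset.sum_congr rfl fun β _ => ?_
    unfold Bv
    rw [Finset.sum_mul]
    refine Finset.sum_congr rfl fun j _ => ?_
    rw [gradV_eq (L α) (hL α) β (x t) (jet x t) j, ← hD,
      jet_smul_const hψ c t β]
    simp only [Pi.smul_apply, smul_eq_mul]
    ring

lemma gradV_fun_contDiff
    (L : (Fin N → ℝ) → (Fin m → (Fin N → ℝ)) → ℝ)
    (hL : ContDiff ℝ (⊤ : ℕ∞) (fun q : (Fin N → ℝ) × (Fin m → (Fin N → ℝ)) => L q.1 q.2))
    {x : (Fin m → ℝ) → (Fin N → ℝ)} (hx : ContDiff ℝ (⊤ : ℕ∞) x) (β : Fin m) (j : Fin N) :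
    ContDiff ℝ (⊤:ℕ∞) (fun t => gradV L β (x t) (jet x t) j) := by
  have heq : (fun t => gradV L β (x t) (jet x t) j)
      = fun t => (fderiv ℝ (fun q : (Fin N → ℝ) × (Fin m → (Fin N → ℝ)) => L q.1 q.2)
          (x t, jet x t)) (0, Pi.single β (Pi.single j 1)) :=
    funext fun t => gradV_eq L hL β (x t) (jet x t) j
  rw [heq]
  exact ((hL.fderiv_right le_rfl).comp (hx.prodMk (jet_contDiff hx))).clm_apply contDiff_const

lemma gradX_fun_contDiff
    (L : (Fin N → ℝ) → (Fin m → (Fin N → ℝ)) → ℝ)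
    (hL : ContDiff ℝ (⊤ : ℕ∞) (fun q : (Fin N → ℝ) × (Fin m → (Fin N → ℝ)) => L q.1 q.2))
    {x : (Fin m → ℝ) → (Fin N → ℝ)} (hx : ContDiff ℝ (⊤ : ℕ∞) x) (j : Fin N) :
    ContDiff ℝ (⊤:ℕ∞) (fun t => gradX L (x t) (jet x t) j) := by
  have heq : (fun t => gradX L (x t) (jet x t) j)
      = fun t => (fderiv ℝ (fun q : (Fin N → ℝ) × (Fin m → (Fin N → ℝ)) => L q.1 q.2)
          (x t, jet x t)) (Pi.single j 1, 0) :=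
    funext fun t => gradX_eq L hL (x t) (jet x t) j
  rw [heq]
  exact ((hL.fderiv_right le_rfl).comp (hx.prodMk (jet_contDiff hx))).clm_apply contDiff_const

lemma Bv_contDiff
    (L : (Fin N → ℝ) → (Fin m → (Fin N → ℝ)) → ℝ)
    (hL : ContDiff ℝ (⊤ : ℕ∞) (fun q : (Fin N → ℝ) × (Fin m → (Fin N → ℝ)) => L q.1 q.2))
    {x : (Fin m → ℝ) → (Fin N → ℝ)} (hx : ContDiff ℝ (⊤ : ℕ∞) x) (β : Fin m) (c : Fin N → ℝ) :
    ContDiff ℝ (⊤:ℕ∞) (Bv L β x c) := by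
  unfold Bv
  exact ContDiff.sum fun j _ => (gradV_fun_contDiff L hL hx β j).mul contDiff_const

lemma Ax_contDiff
    (L : (Fin N → ℝ) → (Fin m → (Fin N → ℝ)) → ℝ)
    (hL : ContDiff ℝ (⊤ : ℕ∞) (fun q : (Fin N → ℝ) × (Fin m → (Fin N → ℝ)) => L q.1 q.2))
    {x : (Fin m → ℝ) → (Fin N → ℝ)} (hx : ContDiff ℝ (⊤ : ℕ∞) x) (c : Fin N → ℝ) :
    ContDiff ℝ (⊤:ℕ∞) (Ax L x c) := by
  unfold Ax
  exact ContDiff.sum fun j _ => (gradX_fun_contDiff L hL hx j).mul contDiff_const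

lemma Bv_single (L : (Fin N → ℝ) → (Fin m → (Fin N → ℝ)) → ℝ) (β : Fin m)
    (x : (Fin m → ℝ) → (Fin N → ℝ)) (j : Fin N) (t : Fin m → ℝ) :
    Bv L β x (Pi.single j 1) t = gradV L β (x t) (jet x t) j := by
  unfold Bv
  rw [Finset.sum_eq_single j]
  · simp
  · intro j' _ hj'
    simp [Pi.single_eq_of_ne hj']
  · simp

lemma Ax_single (L : (Fin N → ℝ) → (Fin m → (Fin N → ℝ)) → ℝ)
    (x : (Fin m → ℝ) → (Fin N → ℝ)) (j : Fin N) (t : Fin m → ℝ) :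
    Ax L x (Pi.single j 1) t = gradX L (x t) (jet x t) j := by
  unfold Ax
  rw [Finset.sum_eq_single j]
  · simp
  · intro j' _ hj'
    simp [Pi.single_eq_of_ne hj']
  · simp

lemma single_ne_zero' (α : Fin m) : (Pi.single α 1 : Fin m → ℝ) ≠ 0 := by
  intro h
  have := congrFun h α
  simp at this

lemma ev_zero_of_tsupport {g : ℝ → ℝ} (hgs : tsupport g ⊆ Set.Ioo 0 1)
    {r : ℝ} (hr : r ∉ Set.Ioo (0:ℝ) 1) : ∀ᶠ r' in nhds r, g r' = 0 :=
  notMem_tsupport_iff_eventuallyEq.mp (fun h => hr (hgs h))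

lemma ev_comp_coord {g : ℝ → ℝ} {τ0 : Fin m → ℝ} (α : Fin m) (r0 : ℝ)
    (hg : ∀ᶠ r' in nhds (τ0 α - r0), g r' = 0) :
    ∀ᶠ t in nhds τ0, g (t α - r0) = 0 :=
  (((continuous_apply α).sub continuous_const : Continuous fun t : Fin m → ℝ => t α - r0).continuousAt).tendsto.eventually hg

lemma step1
    (L : Fin m → (Fin N → ℝ) → (Fin m → (Fin N → ℝ)) → ℝ)
    (hL : ∀ α, ContDiff ℝ (⊤ : ℕ∞)
      (fun q : (Fin N → ℝ) × (Fin m → (Fin N → ℝ)) => L α q.1 q.2))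
    (x : (Fin m → ℝ) → (Fin N → ℝ)) (hx : ContDiff ℝ (⊤ : ℕ∞) x)
    (hcrit : ∀ Γ : ℝ → (Fin m → ℝ), ContDiff ℝ (⊤ : ℕ∞) Γ →
      (∀ s ∈ Set.Icc (0:ℝ) 1, deriv Γ s ≠ 0) →
      ∀ δx : (Fin m → ℝ) → (Fin N → ℝ), ContDiff ℝ (⊤ : ℕ∞) δx →
        (∀ᶠ t in nhds (Γ 0), δx t = 0) → (∀ᶠ t in nhds (Γ 1), δx t = 0) →
        deriv (fun ε : ℝ => action L (fun t => x t + ε • δx t) Γ) 0 = 0) :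
    ∀ (τ : Fin m → ℝ) (α β' : Fin m), α ≠ β' → gradV (L α) β' (x τ) (jet x τ) = 0 := by
  intro τ α β' hne
  funext j
  rw [Pi.zero_apply, ← Bv_single (L α) β' x j τ]
  set c : Fin N → ℝ := Pi.single j 1 with hc
  set v : Fin m → ℝ := Pi.single α 1 with hvdef
  set t0 : Fin m → ℝ := τ - (1/2 : ℝ) • v with ht0
  have hτ : t0 + (1/2:ℝ) • v = τ := by rw [ht0]; abel
  have key : ∀ s ∈ Set.Ioo (0:ℝ) 1, Bv (L α) β' x c (t0 + s • v) = 0 := by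
    apply fund_lemma
    · exact ((Bv_contDiff (L α) (hL α) hx β' c).continuous).comp
        (continuous_const.add (continuous_id.smul continuous_const))
    · intro g hg hgc hgs
      set ψ : (Fin m → ℝ) → ℝ := fun t => (t β' - t0 β') * g (t α - t0 α) with hψdef
      have hgd : Differentiable ℝ g := hg.differentiable (by simp)
      have hψ : ContDiff ℝ (⊤:ℕ∞) ψ :=
        (((ContinuousLinearMap.proj β' : (Fin m → ℝ) →L[ℝ] ℝ).contDiff).sub
          contDiff_const).mul (hg.comp
            (((ContinuousLinearMap.proj α : (Fin m → ℝ) →L[ℝ] ℝ).contDiff).sub contDiff_const))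
      have h0 : ∀ᶠ t in nhds t0, ψ t = 0 := by
        have hev := ev_comp_coord (g := g) (τ0 := t0) α (t0 α)
          (by rw [sub_self]; exact ev_zero_of_tsupport hgs (by norm_num))
        exact hev.mono fun t ht => by rw [hψdef]; simp only [ht, mul_zero]
      have h1 : ∀ᶠ t in nhds (t0 + v), ψ t = 0 := by
        have hco : (t0 + v) α - t0 α = 1 := by simp [hvdef]
        have hev := ev_comp_coord (g := g) (τ0 := t0 + v) α (t0 α)
          (by rw [hco]; exact ev_zero_of_tsupport hgs (by norm_num))
        exact hev.mono fun t ht => by rw [hψdef]; simp only [ht, mul_zero]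
      have hm := master' L hL x hx hcrit t0 v (single_ne_zero' α) ψ hψ h0 h1 c
      refine Eq.trans ?_ hm
      apply intervalIntegral.integral_congr
      intro s _
      set t : Fin m → ℝ := t0 + s • v with htdef
      have htβ' : t β' - t0 β' = 0 := by
        simp [htdef, hvdef, Pi.single_eq_of_ne (Ne.symm hne)]
      have htα : t α - t0 α = s := by
        simp [htdef, hvdef]
      -- compute the derivative of ψ at t
      have h1' : HasFDerivAt (fun t : Fin m → ℝ => t β' - t0 β')
          (ContinuousLinearMap.proj β' : (Fin m → ℝ) →L[ℝ] ℝ) t := by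
        have h : HasFDerivAt (fun u : Fin m → ℝ => u β')
            (ContinuousLinearMap.proj β' : (Fin m → ℝ) →L[ℝ] ℝ) t :=
          (ContinuousLinearMap.proj β' : (Fin m → ℝ) →L[ℝ] ℝ).hasFDerivAt
        exact h.sub_const (t0 β')
      have h2' : HasFDerivAt (fun t : Fin m → ℝ => g (t α - t0 α))
          ((deriv g (t α - t0 α)) • (ContinuousLinearMap.proj α : (Fin m → ℝ) →L[ℝ] ℝ)) t := by
        have hin : HasFDerivAt (fun t : Fin m → ℝ => t α - t0 α)
            (ContinuousLinearMap.proj α : (Fin m → ℝ) →L[ℝ] ℝ) t := by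
          have h : HasFDerivAt (fun u : Fin m → ℝ => u α)
              (ContinuousLinearMap.proj α : (Fin m → ℝ) →L[ℝ] ℝ) t :=
            (ContinuousLinearMap.proj α : (Fin m → ℝ) →L[ℝ] ℝ).hasFDerivAt
          exact h.sub_const (t0 α)
        have h := (hgd.differentiableAt.hasDerivAt).comp_hasFDerivAt t hin
        exact h
      have hmulfd : HasFDerivAt ψ
          ((t β' - t0 β') • ((deriv g (t α - t0 α)) •
              (ContinuousLinearMap.proj α : (Fin m → ℝ) →L[ℝ] ℝ))
            + (g (t α - t0 α)) • (ContinuousLinearMap.proj β' : (Fin m → ℝ) →L[ℝ] ℝ)) t :=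
        h1'.mul h2'
      have hψt : ψ t = 0 := by rw [hψdef]; simp only [htβ', zero_mul]
      have hfd_eval : ∀ γ : Fin m, fderiv ℝ ψ t (Pi.single γ 1)
          = g s * ((Pi.single γ 1 : Fin m → ℝ) β') := by
        intro γ
        rw [hmulfd.fderiv]
        simp only [ContinuousLinearMap.add_apply, ContinuousLinearMap.coe_smul',
          Pi.smul_apply, ContinuousLinearMap.proj_apply, htβ', htα, zero_smul,
          smul_eq_mul, zero_add, zero_mul]
      have hterm : ∀ α' : Fin m,
          (Ax (L α') x c t * ψ t + ∑ γ, Bv (L α') γ x c t * fderiv ℝ ψ t (Pi.single γ 1)) * v α'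
          = (Bv (L α') β' x c t * g s) * v α' := by
        intro α'
        rw [hψt, mul_zero, zero_add]
        congr 1
        rw [Finset.sum_eq_single β']
        · rw [hfd_eval β']
          simp [mul_comm]
        · intro γ _ hγ
          rw [hfd_eval γ]
          simp [Pi.single_eq_of_ne (Ne.symm hγ)]
        · simp
      show Bv (L α) β' x c t * g s
          = ∑ α', (Ax (L α') x c t * ψ t
              + ∑ γ, Bv (L α') γ x c t * fderiv ℝ ψ t (Pi.single γ 1)) * v α'
      rw [Finset.sum_congr rfl fun α' _ => hterm α']
      rw [Finset.sum_eq_single α]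
      · simp [hvdef]
      · intro α'' _ hα''
        simp [hvdef, Pi.single_eq_of_ne hα'']
      · simp
  have h12 := key (1/2) (by constructor <;> norm_num)
  rw [hτ] at h12
  exact h12

lemma step2
    (L : Fin m → (Fin N → ℝ) → (Fin m → (Fin N → ℝ)) → ℝ)
    (hL : ∀ α, ContDiff ℝ (⊤ : ℕ∞)
      (fun q : (Fin N → ℝ) × (Fin m → (Fin N → ℝ)) => L α q.1 q.2))
    (x : (Fin m → ℝ) → (Fin N → ℝ)) (hx : ContDiff ℝ (⊤ : ℕ∞) x)
    (hcrit : ∀ Γ : ℝ → (Fin m → ℝ), ContDiff ℝ (⊤ : ℕ∞) Γ →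
      (∀ s ∈ Set.Icc (0:ℝ) 1, deriv Γ s ≠ 0) →
      ∀ δx : (Fin m → ℝ) → (Fin N → ℝ), ContDiff ℝ (⊤ : ℕ∞) δx →
        (∀ᶠ t in nhds (Γ 0), δx t = 0) → (∀ᶠ t in nhds (Γ 1), δx t = 0) →
        deriv (fun ε : ℝ => action L (fun t => x t + ε • δx t) Γ) 0 = 0)
    (hEL1 : ∀ (τ : Fin m → ℝ) (α β' : Fin m), α ≠ β' →
      gradV (L α) β' (x τ) (jet x τ) = 0) :
    ∀ (τ : Fin m → ℝ) (α β : Fin m),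
      gradV (L α) α (x τ) (jet x τ) = gradV (L β) β (x τ) (jet x τ) := by
  have hBv0 : ∀ (α β' : Fin m), α ≠ β' → ∀ (c : Fin N → ℝ) (t : Fin m → ℝ),
      Bv (L α) β' x c t = 0 := by
    intro α β' h c t
    unfold Bv
    rw [hEL1 t α β' h]
    simp
  intro τ α β
  rcases eq_or_ne α β with rfl | hne
  · rfl
  funext j
  rw [← Bv_single (L α) α x j τ, ← Bv_single (L β) β x j τ]
  rw [← sub_eq_zero]
  set c : Fin N → ℝ := Pi.single j 1 with hc
  set v : Fin m → ℝ := Pi.single α 1 + Pi.single β 1 with hvdef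
  have hvα : v α = 1 := by
    rw [hvdef]
    simp only [Pi.add_apply, Pi.single_eq_same]
    rw [Pi.single_eq_of_ne hne]
    norm_num
  have hvβ : v β = 1 := by
    rw [hvdef]
    simp only [Pi.add_apply, Pi.single_eq_same]
    rw [Pi.single_eq_of_ne (Ne.symm hne)]
    norm_num
  have hvne : v ≠ 0 := by
    intro h
    have := congrFun h α
    rw [hvα] at this
    simp at this
  set t0 : Fin m → ℝ := τ - (1/2 : ℝ) • v with ht0
  have hτ : t0 + (1/2:ℝ) • v = τ := by rw [ht0]; abel
  have key : ∀ s ∈ Set.Ioo (0:ℝ) 1,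
      Bv (L α) α x c (t0 + s • v) - Bv (L β) β x c (t0 + s • v) = 0 := by
    apply fund_lemma
    · exact (((Bv_contDiff (L α) (hL α) hx α c).sub
        (Bv_contDiff (L β) (hL β) hx β c)).continuous).comp
        (continuous_const.add (continuous_id.smul continuous_const))
    · intro g hg hgc hgs
      set ψ : (Fin m → ℝ) → ℝ :=
        fun t => ((t α - t0 α) - (t β - t0 β)) * g (t α - t0 α) with hψdef
      have hgd : Differentiable ℝ g := hg.differentiable (by simp)
      have hprojCD : ∀ γ : Fin m, ContDiff ℝ (⊤:ℕ∞) (fun t : Fin m → ℝ => t γ - t0 γ) :=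
        fun γ => ((ContinuousLinearMap.proj γ : (Fin m → ℝ) →L[ℝ] ℝ).contDiff).sub
          contDiff_const
      have hψ : ContDiff ℝ (⊤:ℕ∞) ψ :=
        ((hprojCD α).sub (hprojCD β)).mul (hg.comp (hprojCD α))
      have h0 : ∀ᶠ t in nhds t0, ψ t = 0 := by
        have hev := ev_comp_coord (g := g) (τ0 := t0) α (t0 α)
          (by rw [sub_self]; exact ev_zero_of_tsupport hgs (by norm_num))
        exact hev.mono fun t ht => by rw [hψdef]; simp only [ht, mul_zero]
      have h1 : ∀ᶠ t in nhds (t0 + v), ψ t = 0 := by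
        have hco : (t0 + v) α - t0 α = 1 := by simp [hvα]
        have hev := ev_comp_coord (g := g) (τ0 := t0 + v) α (t0 α)
          (by rw [hco]; exact ev_zero_of_tsupport hgs (by norm_num))
        exact hev.mono fun t ht => by rw [hψdef]; simp only [ht, mul_zero]
      have hm := master' L hL x hx hcrit t0 v hvne ψ hψ h0 h1 c
      refine Eq.trans ?_ hm
      apply intervalIntegral.integral_congr
      intro s _
      set t : Fin m → ℝ := t0 + s • v with htdef
      have htα : t α - t0 α = s := by simp [htdef, hvα]
      have htβ : t β - t0 β = s := by simp [htdef, hvβ]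
      have hfac : (t α - t0 α) - (t β - t0 β) = 0 := by rw [htα, htβ, sub_self]
      have h1' : HasFDerivAt (fun t : Fin m → ℝ => (t α - t0 α) - (t β - t0 β))
          ((ContinuousLinearMap.proj α : (Fin m → ℝ) →L[ℝ] ℝ)
            - (ContinuousLinearMap.proj β : (Fin m → ℝ) →L[ℝ] ℝ)) t := by
        have ha : HasFDerivAt (fun t : Fin m → ℝ => t α - t0 α)
            (ContinuousLinearMap.proj α : (Fin m → ℝ) →L[ℝ] ℝ) t := by
          have h : HasFDerivAt (fun u : Fin m → ℝ => u α)
              (ContinuousLinearMap.proj α : (Fin m → ℝ) →L[ℝ] ℝ) t :=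
            (ContinuousLinearMap.proj α : (Fin m → ℝ) →L[ℝ] ℝ).hasFDerivAt
          exact h.sub_const (t0 α)
        have hb : HasFDerivAt (fun t : Fin m → ℝ => t β - t0 β)
            (ContinuousLinearMap.proj β : (Fin m → ℝ) →L[ℝ] ℝ) t := by
          have h : HasFDerivAt (fun u : Fin m → ℝ => u β)
              (ContinuousLinearMap.proj β : (Fin m → ℝ) →L[ℝ] ℝ) t :=
            (ContinuousLinearMap.proj β : (Fin m → ℝ) →L[ℝ] ℝ).hasFDerivAt
          exact h.sub_const (t0 β)
        exact ha.sub hb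
      have h2' : HasFDerivAt (fun t : Fin m → ℝ => g (t α - t0 α))
          ((deriv g (t α - t0 α)) • (ContinuousLinearMap.proj α : (Fin m → ℝ) →L[ℝ] ℝ)) t := by
        have hin : HasFDerivAt (fun t : Fin m → ℝ => t α - t0 α)
            (ContinuousLinearMap.proj α : (Fin m → ℝ) →L[ℝ] ℝ) t := by
          have h : HasFDerivAt (fun u : Fin m → ℝ => u α)
              (ContinuousLinearMap.proj α : (Fin m → ℝ) →L[ℝ] ℝ) t :=
            (ContinuousLinearMap.proj α : (Fin m → ℝ) →L[ℝ] ℝ).hasFDerivAt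
          exact h.sub_const (t0 α)
        have h := (hgd.differentiableAt.hasDerivAt).comp_hasFDerivAt t hin
        exact h
      have hmulfd : HasFDerivAt ψ
          (((t α - t0 α) - (t β - t0 β)) • ((deriv g (t α - t0 α)) •
              (ContinuousLinearMap.proj α : (Fin m → ℝ) →L[ℝ] ℝ))
            + (g (t α - t0 α)) •
              ((ContinuousLinearMap.proj α : (Fin m → ℝ) →L[ℝ] ℝ)
                - (ContinuousLinearMap.proj β : (Fin m → ℝ) →L[ℝ] ℝ))) t :=
        h1'.mul h2'
      have hψt : ψ t = 0 := by rw [hψdef]; simp only [hfac, zero_mul]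
      have hfd_eval : ∀ γ : Fin m, fderiv ℝ ψ t (Pi.single γ 1)
          = g s * ((Pi.single γ 1 : Fin m → ℝ) α - (Pi.single γ 1 : Fin m → ℝ) β) := by
        intro γ
        rw [hmulfd.fderiv]
        simp only [ContinuousLinearMap.add_apply, ContinuousLinearMap.coe_smul',
          Pi.smul_apply, ContinuousLinearMap.coe_sub', Pi.sub_apply,
          ContinuousLinearMap.proj_apply, smul_eq_mul]
        rw [hfac, htα]
        ring
      have hterm : ∀ α' : Fin m,
          (Ax (L α') x c t * ψ t + ∑ γ, Bv (L α') γ x c t * fderiv ℝ ψ t (Pi.single γ 1)) * v α'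
          = ((Bv (L α') α x c t - Bv (L α') β x c t) * g s) * v α' := by
        intro α'
        rw [hψt, mul_zero, zero_add]
        congr 1
        have hsplit : ∀ γ : Fin m, Bv (L α') γ x c t * fderiv ℝ ψ t (Pi.single γ 1)
            = Bv (L α') γ x c t * g s * (Pi.single γ 1 : Fin m → ℝ) α
              - Bv (L α') γ x c t * g s * (Pi.single γ 1 : Fin m → ℝ) β := by
          intro γ
          rw [hfd_eval γ]
          ring
        rw [Finset.sum_congr rfl fun γ _ => hsplit γ, Finset.sum_sub_distrib]
        have hA : ∑ γ, Bv (L α') γ x c t * g s * (Pi.single γ 1 : Fin m → ℝ) α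
            = Bv (L α') α x c t * g s := by
          rw [Finset.sum_eq_single α]
          · simp
          · intro γ _ hγ
            simp [Pi.single_eq_of_ne (Ne.symm hγ)]
          · simp
        have hB : ∑ γ, Bv (L α') γ x c t * g s * (Pi.single γ 1 : Fin m → ℝ) β
            = Bv (L α') β x c t * g s := by
          rw [Finset.sum_eq_single β]
          · simp
          · intro γ _ hγ
            simp [Pi.single_eq_of_ne (Ne.symm hγ)]
          · simp
        rw [hA, hB]
        ring
      show (Bv (L α) α x c t - Bv (L β) β x c t) * g s
          = ∑ α', (Ax (L α') x c t * ψ t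
              + ∑ γ, Bv (L α') γ x c t * fderiv ℝ ψ t (Pi.single γ 1)) * v α'
      rw [Finset.sum_congr rfl fun α' _ => hterm α']
      have hmul : ∀ α' : Fin m,
          ((Bv (L α') α x c t - Bv (L α') β x c t) * g s) * v α'
          = ((Bv (L α') α x c t - Bv (L α') β x c t) * g s)
              * (Pi.single α 1 : Fin m → ℝ) α'
            + ((Bv (L α') α x c t - Bv (L α') β x c t) * g s)
              * (Pi.single β 1 : Fin m → ℝ) α' := by
        intro α'
        rw [hvdef]
        simp [Pi.add_apply]
        ring
      rw [Finset.sum_congr rfl fun α' _ => hmul α', Finset.sum_add_distrib]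
      have hA : ∑ α', ((Bv (L α') α x c t - Bv (L α') β x c t) * g s)
            * (Pi.single α 1 : Fin m → ℝ) α'
          = (Bv (L α) α x c t - Bv (L α) β x c t) * g s := by
        rw [Finset.sum_eq_single α]
        · simp
        · intro γ _ hγ
          simp [Pi.single_eq_of_ne hγ]
        · simp
      have hB : ∑ α', ((Bv (L α') α x c t - Bv (L α') β x c t) * g s)
            * (Pi.single β 1 : Fin m → ℝ) α'
          = (Bv (L β) α x c t - Bv (L β) β x c t) * g s := by
        rw [Finset.sum_eq_single β]
        · simp
        · intro γ _ hγ
          simp [Pi.single_eq_of_ne hγ]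
        · simp
      rw [hA, hB, hBv0 α β hne c t, hBv0 β α (Ne.symm hne) c t]
      ring
  have h12 := key (1/2) (by constructor <;> norm_num)
  rw [hτ] at h12
  exact h12

lemma fderiv_component {p : (Fin m → ℝ) → (Fin N → ℝ)} (hp : ContDiff ℝ (⊤:ℕ∞) p)
    (τ w : Fin m → ℝ) (j : Fin N) :
    fderiv ℝ p τ w j = fderiv ℝ (fun t => p t j) τ w := by
  have h1 : HasFDerivAt p (fderiv ℝ p τ) τ :=
    ((hp.differentiable (by simp)).differentiableAt).hasFDerivAt
  have h2 : HasFDerivAt (fun t => p t j)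
      ((ContinuousLinearMap.proj j : (Fin N → ℝ) →L[ℝ] ℝ).comp (fderiv ℝ p τ)) τ := by
    have h := ((ContinuousLinearMap.proj j : (Fin N → ℝ) →L[ℝ] ℝ).hasFDerivAt).comp τ h1
    exact h
  rw [h2.fderiv]
  rfl

lemma step3
    (L : Fin m → (Fin N → ℝ) → (Fin m → (Fin N → ℝ)) → ℝ)
    (hL : ∀ α, ContDiff ℝ (⊤ : ℕ∞)
      (fun q : (Fin N → ℝ) × (Fin m → (Fin N → ℝ)) => L α q.1 q.2))
    (x : (Fin m → ℝ) → (Fin N → ℝ)) (hx : ContDiff ℝ (⊤ : ℕ∞) x)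
    (hcrit : ∀ Γ : ℝ → (Fin m → ℝ), ContDiff ℝ (⊤ : ℕ∞) Γ →
      (∀ s ∈ Set.Icc (0:ℝ) 1, deriv Γ s ≠ 0) →
      ∀ δx : (Fin m → ℝ) → (Fin N → ℝ), ContDiff ℝ (⊤ : ℕ∞) δx →
        (∀ᶠ t in nhds (Γ 0), δx t = 0) → (∀ᶠ t in nhds (Γ 1), δx t = 0) →
        deriv (fun ε : ℝ => action L (fun t => x t + ε • δx t) Γ) 0 = 0) :
    ∀ (τ : Fin m → ℝ) (α : Fin m) (j : Fin N),
      fderiv ℝ (fun t => gradV (L α) α (x t) (jet x t) j) τ (Pi.single α 1)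
        = gradX (L α) (x τ) (jet x τ) j := by
  intro τ α j
  set c : Fin N → ℝ := Pi.single j 1 with hc
  set v : Fin m → ℝ := Pi.single α 1 with hvdef
  set t0 : Fin m → ℝ := τ - (1/2 : ℝ) • v with ht0
  have hτ : t0 + (1/2:ℝ) • v = τ := by rw [ht0]; abel
  have hlineCD : ContDiff ℝ (⊤:ℕ∞) (fun s : ℝ => t0 + s • v) :=
    contDiff_const.add (contDiff_id.smul contDiff_const)
  have hlineD : ∀ s : ℝ, HasDerivAt (fun s : ℝ => t0 + s • v) v s := by
    intro s
    have := ((hasDerivAt_id s).smul_const v).const_add t0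
    simpa using this
  set F : (Fin m → ℝ) → ℝ := Bv (L α) α x c with hF
  have hFsm : ContDiff ℝ (⊤:ℕ∞) F := Bv_contDiff (L α) (hL α) hx α c
  set P : ℝ → ℝ := fun s => F (t0 + s • v) with hP
  have hPsm : ContDiff ℝ (⊤:ℕ∞) P := hFsm.comp hlineCD
  set A : ℝ → ℝ := fun s => Ax (L α) x c (t0 + s • v) with hA
  have hAcont : Continuous A :=
    ((Ax_contDiff (L α) (hL α) hx c).continuous).comp hlineCD.continuous
  have hP'cont : Continuous (deriv P) := hPsm.continuous_deriv (by exact_mod_cast le_top)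
  have key : ∀ s ∈ Set.Ioo (0:ℝ) 1, A s - deriv P s = 0 := by
    apply fund_lemma
    · exact hAcont.sub hP'cont
    · intro g hg hgc hgs
      have hgd : Differentiable ℝ g := hg.differentiable (by simp)
      set ψ : (Fin m → ℝ) → ℝ := fun t => g (t α - t0 α) with hψdef
      have hψ : ContDiff ℝ (⊤:ℕ∞) ψ :=
        hg.comp (((ContinuousLinearMap.proj α : (Fin m → ℝ) →L[ℝ] ℝ).contDiff).sub
          contDiff_const)
      have h0 : ∀ᶠ t in nhds t0, ψ t = 0 := by
        have hev := ev_comp_coord (g := g) (τ0 := t0) α (t0 α)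
          (by rw [sub_self]; exact ev_zero_of_tsupport hgs (by norm_num))
        exact hev.mono fun t ht => ht
      have h1 : ∀ᶠ t in nhds (t0 + v), ψ t = 0 := by
        have hco : (t0 + v) α - t0 α = 1 := by simp [hvdef]
        have hev := ev_comp_coord (g := g) (τ0 := t0 + v) α (t0 α)
          (by rw [hco]; exact ev_zero_of_tsupport hgs (by norm_num))
        exact hev.mono fun t ht => ht
      have hm := master' L hL x hx hcrit t0 v (single_ne_zero' α) ψ hψ h0 h1 c
      have hm' : ∫ s in (0:ℝ)..1, (A s * g s + P s * deriv g s) = 0 := by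
        refine Eq.trans ?_ hm
        apply intervalIntegral.integral_congr
        intro s _
        set t : Fin m → ℝ := t0 + s • v with htdef
        have htα : t α - t0 α = s := by simp [htdef, hvdef]
        have hψt : ψ t = g s := by rw [hψdef]; simp only [htα]
        have hfdψ : HasFDerivAt ψ ((deriv g (t α - t0 α)) •
            (ContinuousLinearMap.proj α : (Fin m → ℝ) →L[ℝ] ℝ)) t := by
          have hin : HasFDerivAt (fun t : Fin m → ℝ => t α - t0 α)
              (ContinuousLinearMap.proj α : (Fin m → ℝ) →L[ℝ] ℝ) t := by
            have h : HasFDerivAt (fun u : Fin m → ℝ => u α)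
                (ContinuousLinearMap.proj α : (Fin m → ℝ) →L[ℝ] ℝ) t :=
              (ContinuousLinearMap.proj α : (Fin m → ℝ) →L[ℝ] ℝ).hasFDerivAt
            exact h.sub_const (t0 α)
          have h := (hgd.differentiableAt.hasDerivAt).comp_hasFDerivAt t hin
          exact h
        have hfd_eval : ∀ γ : Fin m, fderiv ℝ ψ t (Pi.single γ 1)
            = deriv g s * ((Pi.single γ 1 : Fin m → ℝ) α) := by
          intro γ
          rw [hfdψ.fderiv]
          simp only [ContinuousLinearMap.coe_smul', Pi.smul_apply,
            ContinuousLinearMap.proj_apply, smul_eq_mul, htα]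
        have hterm : ∀ α' : Fin m,
            (Ax (L α') x c t * ψ t
              + ∑ γ, Bv (L α') γ x c t * fderiv ℝ ψ t (Pi.single γ 1)) * v α'
            = (Ax (L α') x c t * g s + Bv (L α') α x c t * deriv g s) * v α' := by
          intro α'
          rw [hψt]
          congr 2
          rw [Finset.sum_eq_single α]
          · rw [hfd_eval α]
            simp [mul_comm]
          · intro γ _ hγ
            rw [hfd_eval γ]
            simp [Pi.single_eq_of_ne (Ne.symm hγ)]
          · simp
        show A s * g s + P s * deriv g s
            = ∑ α', (Ax (L α') x c t * ψ t
                + ∑ γ, Bv (L α') γ x c t * fderiv ℝ ψ t (Pi.single γ 1)) * v α'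
        rw [Finset.sum_congr rfl fun α' _ => hterm α']
        rw [Finset.sum_eq_single α]
        · simp [hA, hP, hF, hvdef, htdef]
        · intro γ _ hγ
          rw [hvdef]
          simp [Pi.single_eq_of_ne hγ]
        · simp
      -- integrate by parts
      have hg0 : g 0 = 0 :=
        image_eq_zero_of_notMem_tsupport (fun h => absurd (hgs h) (by norm_num))
      have hg1 : g 1 = 0 :=
        image_eq_zero_of_notMem_tsupport (fun h => absurd (hgs h) (by norm_num))
      have hPd : ∀ s ∈ Set.uIcc (0:ℝ) 1, HasDerivAt P (deriv P s) s := fun s _ =>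
        ((hPsm.differentiable (by simp)).differentiableAt).hasDerivAt
      have hgdd : ∀ s ∈ Set.uIcc (0:ℝ) 1, HasDerivAt g (deriv g s) s := fun s _ =>
        (hgd.differentiableAt).hasDerivAt
      have hparts := intervalIntegral.integral_mul_deriv_eq_deriv_mul hPd hgdd
        (hP'cont.intervalIntegrable 0 1)
        ((hg.continuous_deriv (by exact_mod_cast le_top)).intervalIntegrable 0 1)
      rw [hg0, hg1, mul_zero, mul_zero] at hparts
      have hint1 : IntervalIntegrable (fun s => A s * g s) volume 0 1 :=
        (hAcont.mul hg.continuous).intervalIntegrable 0 1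
      have hint2 : IntervalIntegrable (fun s => P s * deriv g s) volume 0 1 :=
        (hPsm.continuous.mul (hg.continuous_deriv (by exact_mod_cast le_top))).intervalIntegrable 0 1
      have hsum : (∫ s in (0:ℝ)..1, A s * g s) + ∫ s in (0:ℝ)..1, P s * deriv g s = 0 := by
        rw [← intervalIntegral.integral_add hint1 hint2]
        exact hm'
      have hAg : ∫ s in (0:ℝ)..1, A s * g s = ∫ s in (0:ℝ)..1, deriv P s * g s := by
        rw [hparts] at hsum
        linarith
      have : ∫ s in (0:ℝ)..1, (A s - deriv P s) * g s
          = (∫ s in (0:ℝ)..1, A s * g s) - ∫ s in (0:ℝ)..1, deriv P s * g s := by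
        rw [← intervalIntegral.integral_sub (g := fun s => deriv P s * g s) hint1
          ((hP'cont.mul hg.continuous).intervalIntegrable 0 1 :
            IntervalIntegrable (fun s => deriv P s * g s) volume 0 1)]
        apply intervalIntegral.integral_congr
        intro s _
        ring
      rw [this, hAg, sub_self]
  have h12 := key (1/2) (by constructor <;> norm_num)
  have hA12 : A (1/2) = gradX (L α) (x τ) (jet x τ) j := by
    rw [hA]
    show Ax (L α) x c (t0 + (1/2:ℝ) • v) = _
    rw [hτ, hc]
    exact Ax_single (L α) x j τ
  have hP12 : deriv P (1/2) = fderiv ℝ (fun t => gradV (L α) α (x t) (jet x t) j) τ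
      (Pi.single α 1) := by
    have hFj : F = fun t => gradV (L α) α (x t) (jet x t) j :=
      funext fun t => by rw [hF, hc]; exact Bv_single (L α) α x j t
    have hFd : HasFDerivAt F (fderiv ℝ F (t0 + (1/2:ℝ) • v)) (t0 + (1/2:ℝ) • v) :=
      ((hFsm.differentiable (by simp)).differentiableAt).hasFDerivAt
    have hcomp : HasDerivAt P (fderiv ℝ F (t0 + (1/2:ℝ) • v) v) (1/2:ℝ) := by
      have h := hFd.comp_hasDerivAt (1/2:ℝ) (hlineD (1/2:ℝ))
      exact h
    rw [hcomp.deriv, hτ, hFj, hvdef]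
  rw [hA12, hP12] at h12
  linarith

end MTEL

/-- If a smooth `x : ℝ^m → ℝ^N` is a critical point of `S_Γ` for every
smooth regular curve `Γ` and all smooth variations vanishing near the endpoints, then `x`
satisfies the multi-time Euler–Lagrange equations. -/
theorem multitime_EL_of_critical {m N : ℕ}
    (L : Fin m → (Fin N → ℝ) → (Fin m → (Fin N → ℝ)) → ℝ)
    (hL : ∀ α, ContDiff ℝ (⊤ : ℕ∞)
      (fun q : (Fin N → ℝ) × (Fin m → (Fin N → ℝ)) => L α q.1 q.2))
    (x : (Fin m → ℝ) → (Fin N → ℝ)) (hx : ContDiff ℝ (⊤ : ℕ∞) x)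
    (hcrit : ∀ Γ : ℝ → (Fin m → ℝ), ContDiff ℝ (⊤ : ℕ∞) Γ →
      (∀ s ∈ Set.Icc (0:ℝ) 1, deriv Γ s ≠ 0) →
      ∀ δx : (Fin m → ℝ) → (Fin N → ℝ), ContDiff ℝ (⊤ : ℕ∞) δx →
        (∀ᶠ t in nhds (Γ 0), δx t = 0) → (∀ᶠ t in nhds (Γ 1), δx t = 0) →
        deriv (fun ε : ℝ => action L (fun t => x t + ε • δx t) Γ) 0 = 0) :
    (∀ t : Fin m → ℝ, ∀ α β : Fin m, α ≠ β → gradV (L α) β (x t) (jet x t) = 0) ∧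
    (∃ p : (Fin m → ℝ) → (Fin N → ℝ),
      (∀ (t : Fin m → ℝ) (α : Fin m), gradV (L α) α (x t) (jet x t) = p t) ∧
      (∀ (t : Fin m → ℝ) (α : Fin m), pdv p α t = gradX (L α) (x t) (jet x t))) := by
  have hEL1 := MTEL.step1 L hL x hx hcrit
  refine ⟨hEL1, ?_⟩
  rcases Nat.eq_zero_or_pos m with hm | hm
  · subst hm
    exact ⟨fun _ => 0, fun t α => α.elim0, fun t α => α.elim0⟩
  · set α₀ : Fin m := ⟨0, hm⟩ with hα₀
    set p : (Fin m → ℝ) → (Fin N → ℝ) :=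
      fun t => gradV (L α₀) α₀ (x t) (jet x t) with hpdef
    have hstep2 := MTEL.step2 L hL x hx hcrit hEL1
    refine ⟨p, fun t α => hstep2 t α α₀, ?_⟩
    intro τ α
    funext j
    have hp : ContDiff ℝ (⊤:ℕ∞) p :=
      contDiff_pi.mpr fun j' => MTEL.gradV_fun_contDiff (L α₀) (hL α₀) hx α₀ j'
    have h1 : pdv p α τ j = fderiv ℝ (fun t => p t j) τ (Pi.single α 1) :=
      MTEL.fderiv_component hp τ (Pi.single α 1) j
    have h2 : (fun t => p t j) = fun t => gradV (L α) α (x t) (jet x t) j := by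
      funext t
      exact (congrFun (hstep2 t α α₀) j).symm
    rw [h1, h2]
    exact MTEL.step3 L hL x hx hcrit τ α j
end
end

section
/- Let x : ℝ^m → ℝ^N be a smooth function satisfying the multi-time Euler–Lagrange equations: (i) for all 1 ≤ α ≠ β ≤ m, ∂L_α/∂v_β(x, x_{t_1}, …, x_{t_m}) = 0; (ii) the functions ∂L_α/∂v_α(x, x_{t_1}, …, x_{t_m}) coincide for all α = 1, …, m, with common value a function p : ℝ^m → ℝ^N; (iii) ∂p/∂t_α = ∂L_α/∂x(x, x_{t_1}, …, x_{t_m}) for all α. Then for every smooth regular curve Γ : [0,1] → ℝ^m (with Γ′(s) ≠ 0 for all s) and every smooth variation δx : ℝ^m → ℝ^N that vanishes on a neighbourhood of the endpoints Γ(0) and Γ(1), the first variation satisfies d/dε|_{ε=0} S_Γ(x + ε δx) = 0. -/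
noncomputable section
open scoped Topology
open Metric

lemma clm_pi_apply {ι : Type*} [Fintype ι] [DecidableEq ι]
    {F : Type*} [NormedAddCommGroup F] [NormedSpace ℝ F]
    (φ : (ι → ℝ) →L[ℝ] F) (b : ι → ℝ) :
    φ b = ∑ j, b j • φ (Pi.single j 1) := by
  conv_lhs => rw [← Finset.univ_sum_single b]
  rw [map_sum]
  refine Finset.sum_congr rfl fun j _ => ?_
  have h : Pi.single (M := fun _ : ι => ℝ) j (b j)
      = b j • (Pi.single (M := fun _ : ι => ℝ) j 1) := by
    rw [← Pi.single_smul, smul_eq_mul, mul_one]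
  rw [h, map_smul]


section grads
variable {m N : ℕ} {L : (Fin N → ℝ) → (Fin m → (Fin N → ℝ)) → ℝ}

lemma gradX_eq
    (hL : ContDiff ℝ (⊤ : ℕ∞) (fun q : (Fin N → ℝ) × (Fin m → (Fin N → ℝ)) => L q.1 q.2)) (a : Fin N → ℝ) (V : Fin m → (Fin N → ℝ)) (j : Fin N) :
    gradX L a V j
      = fderiv ℝ (fun q : (Fin N → ℝ) × (Fin m → (Fin N → ℝ)) => L q.1 q.2) (a, V)
          (Pi.single j 1, 0) := by
  set f := fun q : (Fin N → ℝ) × (Fin m → (Fin N → ℝ)) => L q.1 q.2 with hf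
  have hdf : HasFDerivAt f (fderiv ℝ f (a, V)) (a, V) :=
    (hL.differentiable (by simp) (a, V)).hasFDerivAt
  have hincl : HasFDerivAt (fun a' : Fin N → ℝ => ((a', V) : _ × _))
      ((ContinuousLinearMap.id ℝ (Fin N → ℝ)).prod 0) a :=
    (hasFDerivAt_id a).prodMk (hasFDerivAt_const V a)
  have hcomp := hdf.comp a hincl
  have h0 : gradX L a V j = (fderiv ℝ (f ∘ fun a' => (a', V)) a) (Pi.single j 1) := rfl
  rw [h0, hcomp.fderiv]
  rfl

lemma gradV_eq
    (hL : ContDiff ℝ (⊤ : ℕ∞) (fun q : (Fin N → ℝ) × (Fin m → (Fin N → ℝ)) => L q.1 q.2))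
    (β : Fin m) (a : Fin N → ℝ) (V : Fin m → (Fin N → ℝ)) (j : Fin N) :
    gradV L β a V j
      = fderiv ℝ (fun q : (Fin N → ℝ) × (Fin m → (Fin N → ℝ)) => L q.1 q.2) (a, V)
          (0, Pi.single β (Pi.single j 1)) := by
  set f := fun q : (Fin N → ℝ) × (Fin m → (Fin N → ℝ)) => L q.1 q.2 with hf
  have hdf : HasFDerivAt f (fderiv ℝ f (a, V)) (a, V) :=
    (hL.differentiable (by simp) (a, V)).hasFDerivAt
  have hdf' : HasFDerivAt f (fderiv ℝ f (a, V)) (a, Function.update V β (V β)) := by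
    rwa [Function.update_eq_self]
  have hincl : HasFDerivAt (fun w : Fin N → ℝ => ((a, Function.update V β w) : _ × _))
      ((0 : (Fin N → ℝ) →L[ℝ] (Fin N → ℝ)).prod
        (ContinuousLinearMap.pi (Pi.single β (ContinuousLinearMap.id ℝ (Fin N → ℝ)))))
      (V β) :=
    (hasFDerivAt_const a (V β)).prodMk (hasFDerivAt_update V (V β))
  have hcomp := hdf'.comp (V β) hincl
  have h0 : gradV L β a V j
      = (fderiv ℝ (f ∘ fun w => (a, Function.update V β w)) (V β)) (Pi.single j 1) := rfl
  rw [h0, hcomp.fderiv]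
  show fderiv ℝ f (a, V) _ = _
  congr 1
  refine Prod.ext rfl ?_
  funext γ
  by_cases h : γ = β <;>
    simp [ContinuousLinearMap.pi_apply, Pi.single_apply, h]
end grads

lemma hasDerivAt_lagrangian {m N : ℕ} {L : (Fin N → ℝ) → (Fin m → (Fin N → ℝ)) → ℝ}
    (hL : ContDiff ℝ (⊤ : ℕ∞) (fun q : (Fin N → ℝ) × (Fin m → (Fin N → ℝ)) => L q.1 q.2))
    (a b : Fin N → ℝ) (V W : Fin m → (Fin N → ℝ)) :
    HasDerivAt (fun ε : ℝ => L (a + ε • b) (V + ε • W))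
      ((∑ j, gradX L a V j * b j) + ∑ β, ∑ j, gradV L β a V j * W β j) 0 := by
  set f := fun q : (Fin N → ℝ) × (Fin m → (Fin N → ℝ)) => L q.1 q.2 with hf
  set f' := fderiv ℝ f (a, V) with hf'
  have hdf : HasFDerivAt f f' (a, V) :=
    (hL.differentiable (by simp) _).hasFDerivAt
  have hc1 : HasDerivAt (fun ε : ℝ => a + ε • b) b 0 := by
    simpa using ((hasDerivAt_id (0:ℝ)).smul_const b).const_add a
  have hc2 : HasDerivAt (fun ε : ℝ => V + ε • W) W 0 := by
    simpa using ((hasDerivAt_id (0:ℝ)).smul_const W).const_add V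
  have hc : HasDerivAt (fun ε : ℝ => ((a + ε • b, V + ε • W) :
      (Fin N → ℝ) × (Fin m → (Fin N → ℝ)))) (b, W) 0 := hc1.prodMk hc2
  have hdf0 : HasFDerivAt f f' (a + (0:ℝ) • b, V + (0:ℝ) • W) := by simpa using hdf
  have hcomp := hdf0.comp_hasDerivAt 0 hc
  have heq : f' (b, W) = (∑ j, gradX L a V j * b j) + ∑ β, ∑ j, gradV L β a V j * W β j := by
    have hsplit : f' (b, W) = f' (b, 0) + f' (0, W) := by
      rw [← map_add, Prod.mk_add_mk, add_zero, zero_add]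
    have h1 : f' (b, 0) = ∑ j, gradX L a V j * b j := by
      have := clm_pi_apply (f'.comp ((ContinuousLinearMap.id ℝ (Fin N → ℝ)).prod 0)) b
      simp only [ContinuousLinearMap.comp_apply, ContinuousLinearMap.prod_apply,
        ContinuousLinearMap.id_apply, ContinuousLinearMap.zero_apply] at this
      rw [this]
      refine Finset.sum_congr rfl fun j _ => ?_
      rw [gradX_eq hL, smul_eq_mul, mul_comm]
    have h2 : f' (0, W) = ∑ β, ∑ j, gradV L β a V j * W β j := by
      have hW : (((0 : Fin N → ℝ), W) : (Fin N → ℝ) × (Fin m → (Fin N → ℝ)))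
          = ∑ β, (0, Pi.single β (W β)) := by
        refine Prod.ext ?_ ?_
        · simp [Prod.fst_sum]
        · simp [Prod.snd_sum, Finset.univ_sum_single]
      rw [hW, map_sum]
      refine Finset.sum_congr rfl fun β _ => ?_
      have key : ∀ v : Fin N → ℝ, f' (0, Pi.single β v)
          = (f'.comp ((0 : (Fin N → ℝ) →L[ℝ] (Fin N → ℝ)).prod
              (ContinuousLinearMap.pi (Pi.single β (ContinuousLinearMap.id ℝ (Fin N → ℝ)))))) v := by
        intro v
        simp only [ContinuousLinearMap.comp_apply, ContinuousLinearMap.prod_apply,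
          ContinuousLinearMap.zero_apply]
        congr 1
        refine Prod.ext rfl ?_
        funext γ
        by_cases h : γ = β <;>
          simp [ContinuousLinearMap.pi_apply, Pi.single_apply, h]
      rw [key (W β), clm_pi_apply]
      refine Finset.sum_congr rfl fun j _ => ?_
      rw [← key (Pi.single j 1), ← gradV_eq hL, smul_eq_mul, mul_comm]
    rw [hsplit, h1, h2]
  rw [← heq]
  exact hcomp

lemma contDiff_jet {m N : ℕ} {x : (Fin m → ℝ) → (Fin N → ℝ)} (hx : ContDiff ℝ (⊤:ℕ∞) x) :
    ContDiff ℝ (⊤:ℕ∞) (fun t => jet x t) := by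
  refine contDiff_pi.2 fun β => ?_
  show ContDiff ℝ (⊤:ℕ∞) fun t => (fderiv ℝ x t) (Pi.single β 1)
  exact (hx.fderiv_right (m := (⊤:ℕ∞)) (by exact_mod_cast le_top)).clm_apply contDiff_const

lemma jet_add_smul {m N : ℕ} {x δx : (Fin m → ℝ) → (Fin N → ℝ)}
    (hx : ContDiff ℝ (⊤:ℕ∞) x) (hδ : ContDiff ℝ (⊤:ℕ∞) δx) (ε : ℝ) (t : Fin m → ℝ) :
    jet (fun t' => x t' + ε • δx t') t = jet x t + ε • jet δx t := by
  funext β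
  have hxd : DifferentiableAt ℝ x t := (hx.differentiable (by simp)) t
  have hδd : DifferentiableAt ℝ (fun t' => ε • δx t') t :=
    ((hδ.differentiable (by simp)) t).const_smul ε
  show fderiv ℝ (fun t' => x t' + ε • δx t') t (Pi.single β 1) = _
  rw [fderiv_fun_add hxd hδd, fderiv_fun_const_smul ((hδ.differentiable (by simp)) t)]
  simp [jet, pdv]

/-- If a smooth `x : ℝ^m → ℝ^N` satisfies the multi-time Euler–Lagrange
equations, then `x` is a critical point of `S_Γ` for every smooth regular curve `Γ` and
every smooth variation vanishing near the endpoints. -/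
theorem critical_of_multitime_EL {m N : ℕ}
    (L : Fin m → (Fin N → ℝ) → (Fin m → (Fin N → ℝ)) → ℝ)
    (hL : ∀ α, ContDiff ℝ (⊤ : ℕ∞)
      (fun q : (Fin N → ℝ) × (Fin m → (Fin N → ℝ)) => L α q.1 q.2))
    (x : (Fin m → ℝ) → (Fin N → ℝ)) (hx : ContDiff ℝ (⊤ : ℕ∞) x)
    (hEL1 : ∀ t : Fin m → ℝ, ∀ α β : Fin m, α ≠ β → gradV (L α) β (x t) (jet x t) = 0)
    (p : (Fin m → ℝ) → (Fin N → ℝ))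
    (hEL2 : ∀ (t : Fin m → ℝ) (α : Fin m), gradV (L α) α (x t) (jet x t) = p t)
    (hEL3 : ∀ (t : Fin m → ℝ) (α : Fin m), pdv p α t = gradX (L α) (x t) (jet x t)) :
    ∀ Γ : ℝ → (Fin m → ℝ), ContDiff ℝ (⊤ : ℕ∞) Γ →
      (∀ s ∈ Set.Icc (0:ℝ) 1, deriv Γ s ≠ 0) →
      ∀ δx : (Fin m → ℝ) → (Fin N → ℝ), ContDiff ℝ (⊤ : ℕ∞) δx →
        (∀ᶠ t in nhds (Γ 0), δx t = 0) → (∀ᶠ t in nhds (Γ 1), δx t = 0) →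
        deriv (fun ε : ℝ => action L (fun t => x t + ε • δx t) Γ) 0 = 0 := by
  intro Γ hΓ hΓ' δx hδx hend0 hend1
  rcases Nat.eq_zero_or_pos m with hm | hm
  · exfalso
    apply hΓ' 0 (by constructor <;> norm_num)
    subst hm
    exact Subsingleton.elim _ _
  set α₀ : Fin m := ⟨0, hm⟩ with hα₀
  -- smoothness of building blocks
  have hjx : ContDiff ℝ (⊤:ℕ∞) (fun t => jet x t) := contDiff_jet hx
  have hjδ : ContDiff ℝ (⊤:ℕ∞) (fun t => jet δx t) := contDiff_jet hδx
  have hderivΓ : ContDiff ℝ (⊤:ℕ∞) (deriv Γ) := by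
    have h1 := hΓ.fderiv_right (m := (⊤:ℕ∞)) (by exact_mod_cast le_top)
    have h2 : ContDiff ℝ (⊤:ℕ∞) fun s => (fderiv ℝ Γ s) 1 := h1.clm_apply contDiff_const
    have h3 : deriv Γ = fun s => (fderiv ℝ Γ s) 1 := funext fun s => (fderiv_apply_one_eq_deriv).symm
    rw [h3]
    exact h2
  have hp : ContDiff ℝ (⊤:ℕ∞) p := by
    have hpe : p = fun t => gradV (L α₀) α₀ (x t) (jet x t) := funext fun t => (hEL2 t α₀).symm
    rw [hpe]
    refine contDiff_pi.2 fun j => ?_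
    have he : (fun t => gradV (L α₀) α₀ (x t) (jet x t) j)
        = fun t => (fderiv ℝ (fun q : (Fin N → ℝ) × (Fin m → (Fin N → ℝ)) => L α₀ q.1 q.2)
            (x t, jet x t)) (0, Pi.single α₀ (Pi.single j 1)) := by
      funext t; exact gradV_eq (hL α₀) α₀ (x t) (jet x t) j
    rw [he]
    exact (((hL α₀).fderiv_right (by exact_mod_cast le_top)).comp
      (hx.prodMk hjx)).clm_apply contDiff_const
  -- the two-variable integrand
  set G : ℝ × ℝ → ℝ := fun q =>
    ∑ α, L α (x (Γ q.2) + q.1 • δx (Γ q.2)) (jet x (Γ q.2) + q.1 • jet δx (Γ q.2))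
        * deriv Γ q.2 α with hGdef
  have hactG : ∀ ε : ℝ, action L (fun t => x t + ε • δx t) Γ = ∫ s in (0:ℝ)..1, G (ε, s) := by
    intro ε
    unfold action
    refine intervalIntegral.integral_congr fun s _ => ?_
    refine Finset.sum_congr rfl fun α _ => ?_
    rw [jet_add_smul hx hδx]
  have hG : ContDiff ℝ (⊤:ℕ∞) G := by
    refine ContDiff.sum fun α _ => ContDiff.mul ?_ ?_
    · have hpair : ContDiff ℝ (⊤:ℕ∞) (fun q : ℝ×ℝ =>
          ((x (Γ q.2) + q.1 • δx (Γ q.2), jet x (Γ q.2) + q.1 • jet δx (Γ q.2)) :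
            (Fin N → ℝ) × (Fin m → (Fin N → ℝ)))) := by
        refine ContDiff.prodMk ?_ ?_
        · exact ((hx.comp (hΓ.comp contDiff_snd))).add
            (contDiff_fst.smul (hδx.comp (hΓ.comp contDiff_snd)))
        · exact ((hjx.comp (hΓ.comp contDiff_snd))).add
            (contDiff_fst.smul (hjδ.comp (hΓ.comp contDiff_snd)))
      exact (hL α).comp hpair
    · exact contDiff_pi.1 (hderivΓ.comp contDiff_snd) α
  have hGdiff : Differentiable ℝ G := hG.differentiable (by simp)
  set F' : ℝ → ℝ → ℝ := fun ε s => fderiv ℝ G (ε, s) (1, 0) with hF'def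
  have hhasF' : ∀ (s ε : ℝ), HasDerivAt (fun ε' => G (ε', s)) (F' ε s) ε := by
    intro s ε
    have h1 : HasDerivAt (fun ε' : ℝ => ((ε', s) : ℝ×ℝ)) ((1:ℝ), (0:ℝ)) ε :=
      (hasDerivAt_id ε).prodMk (hasDerivAt_const ε s)
    exact (hGdiff (ε, s)).hasFDerivAt.comp_hasDerivAt ε h1
  have hF'cont : Continuous (fun q : ℝ×ℝ => F' q.1 q.2) := by
    have h1 := (hG.fderiv_right (m := (⊤:ℕ∞)) (by exact_mod_cast le_top)).clm_apply
      (contDiff_const (c := ((1:ℝ),(0:ℝ))))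
    exact h1.continuous
  -- dominated differentiation under the integral
  obtain ⟨C, hC⟩ := ((isCompact_closedBall (0:ℝ) 1).prod isCompact_Icc).exists_bound_of_continuousOn
      (hF'cont.continuousOn (s := Metric.closedBall (0:ℝ) 1 ×ˢ Set.Icc (0:ℝ) 1))
  have hIoc : Set.uIoc (0:ℝ) 1 ⊆ Set.Icc (0:ℝ) 1 := by
    rw [Set.uIoc_of_le (by norm_num)]
    exact Set.Ioc_subset_Icc_self
  have key := intervalIntegral.hasDerivAt_integral_of_dominated_loc_of_deriv_le
      (μ := MeasureTheory.volume) (F := fun ε s => G (ε, s)) (F' := F') (x₀ := (0:ℝ))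
      (a := (0:ℝ)) (b := (1:ℝ)) (bound := fun _ => C) (s := Metric.ball (0:ℝ) 1) (Metric.ball_mem_nhds 0 one_pos)
      (Filter.Eventually.of_forall fun ε =>
        ((hG.continuous.comp (continuous_const.prodMk continuous_id)).aestronglyMeasurable).restrict)
      ((hG.continuous.comp (continuous_const.prodMk continuous_id)).intervalIntegrable 0 1)
      (((hF'cont.comp (continuous_const.prodMk continuous_id)).aestronglyMeasurable).restrict)
      (Filter.Eventually.of_forall fun s hs ε hε => by
        exact hC (ε, s) ⟨Metric.ball_subset_closedBall hε, hIoc hs⟩)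
      intervalIntegrable_const
      (Filter.Eventually.of_forall fun s _ ε _ => hhasF' s ε)
  have hderiv_eq : deriv (fun ε : ℝ => action L (fun t => x t + ε • δx t) Γ) 0
      = ∫ s in (0:ℝ)..1, F' 0 s := by
    have hkey2 : HasDerivAt (fun ε : ℝ => action L (fun t => x t + ε • δx t) Γ)
        (∫ s in (0:ℝ)..1, F' 0 s) 0 := by
      have h2 := key.2
      refine h2.congr_of_eventuallyEq (Filter.Eventually.of_forall fun ε => ?_)
      exact hactG ε
    exact hkey2.deriv
  rw [hderiv_eq]
  -- the integrand at ε = 0 is an exact s-derivative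
  set hfun : ℝ → ℝ := fun s => ∑ j, p (Γ s) j * δx (Γ s) j with hhdef
  have hmain : ∀ s : ℝ, HasDerivAt hfun (F' 0 s) s := by
    intro s
    set t := Γ s with ht
    set c := deriv Γ s with hc
    have hA : HasDerivAt (fun ε : ℝ => G (ε, s))
        (∑ α, ((∑ j, gradX (L α) (x t) (jet x t) j * δx t j)
          + ∑ β, ∑ j, gradV (L α) β (x t) (jet x t) j * jet δx t β j) * c α) 0 := by
      refine HasDerivAt.fun_sum fun α _ => ?_
      exact (hasDerivAt_lagrangian (hL α) (x t) (δx t) (jet x t) (jet δx t)).mul_const (c α)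
    have hF0 : F' 0 s = ∑ α, ((∑ j, pdv p α t j * δx t j)
          + ∑ j, p t j * pdv δx α t j) * c α := by
      rw [(hhasF' s 0).unique hA]
      refine Finset.sum_congr rfl fun α _ => ?_
      congr 1
      congr 1
      · exact Finset.sum_congr rfl fun j _ => by rw [← hEL3 t α]
      · rw [Finset.sum_eq_single α]
        · rw [hEL2 t α]; rfl
        · intro β _ hβ
          rw [hEL1 t α β (Ne.symm hβ)]
          simp
        · intro hα; exact absurd (Finset.mem_univ α) hα
    have hΓs : HasDerivAt Γ c s := ((hΓ.differentiable (by simp)) s).hasDerivAt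
    have hpc : HasDerivAt (fun s' => p (Γ s')) (fderiv ℝ p t c) s :=
      ((hp.differentiable (by simp) t).hasFDerivAt).comp_hasDerivAt s hΓs
    have hδc : HasDerivAt (fun s' => δx (Γ s')) (fderiv ℝ δx t c) s :=
      ((hδx.differentiable (by simp) t).hasFDerivAt).comp_hasDerivAt s hΓs
    have hj : ∀ j : Fin N, HasDerivAt (fun s' => p (Γ s') j * δx (Γ s') j)
        (fderiv ℝ p t c j * δx t j + p t j * fderiv ℝ δx t c j) s := by
      intro j
      have h1 : HasDerivAt (fun s' => p (Γ s') j) (fderiv ℝ p t c j) s :=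
        (ContinuousLinearMap.proj (R := ℝ) (φ := fun _ : Fin N => ℝ)
          j).hasFDerivAt.comp_hasDerivAt s hpc
      have h2 : HasDerivAt (fun s' => δx (Γ s') j) (fderiv ℝ δx t c j) s :=
        (ContinuousLinearMap.proj (R := ℝ) (φ := fun _ : Fin N => ℝ)
          j).hasFDerivAt.comp_hasDerivAt s hδc
      exact h1.mul h2
    have hh : HasDerivAt hfun
        (∑ j, (fderiv ℝ p t c j * δx t j + p t j * fderiv ℝ δx t c j)) s :=
      HasDerivAt.fun_sum fun j _ => hj j
    have hdp : ∀ j, fderiv ℝ p t c j = ∑ α, c α * pdv p α t j := by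
      intro j
      rw [clm_pi_apply (fderiv ℝ p t) c]
      simp [pdv, Finset.sum_apply]
    have hdδ : ∀ j, fderiv ℝ δx t c j = ∑ α, c α * pdv δx α t j := by
      intro j
      rw [clm_pi_apply (fderiv ℝ δx t) c]
      simp [pdv, Finset.sum_apply]
    have hval : (∑ j, (fderiv ℝ p t c j * δx t j + p t j * fderiv ℝ δx t c j))
        = ∑ α, ((∑ j, pdv p α t j * δx t j) + ∑ j, p t j * pdv δx α t j) * c α := by
      simp only [hdp, hdδ, Finset.sum_add_distrib, Finset.sum_mul, Finset.mul_sum, add_mul]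
      congr 1
      · rw [Finset.sum_comm]
        exact Finset.sum_congr rfl fun α _ => Finset.sum_congr rfl fun j _ => by ring
      · rw [Finset.sum_comm]
        exact Finset.sum_congr rfl fun α _ => Finset.sum_congr rfl fun j _ => by ring
    rw [hF0, ← hval]
    exact hh
  have hsub : ∫ s in (0:ℝ)..1, F' 0 s = hfun 1 - hfun 0 :=
    intervalIntegral.integral_eq_sub_of_hasDerivAt (fun s _ => hmain s) key.1
  rw [hsub]
  have e1 : δx (Γ 1) = 0 := hend1.self_of_nhds
  have e0 : δx (Γ 0) = 0 := hend0.self_of_nhds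
  simp [hhdef, e0, e1]
end
end

section
/- Let H_1, …, H_m : ℝ^N × ℝ^N → ℝ be smooth functions. Suppose that for every point (x_0, p_0) ∈ ℝ^N × ℝ^N there exist smooth functions x, p : ℝ^m → ℝ^N with (x(0), p(0)) = (x_0, p_0) satisfying simultaneously all Hamiltonian equations ∂x/∂t_α = ∂H_α/∂p(x,p) and ∂p/∂t_α = −∂H_α/∂x(x,p) for α = 1, …, m. Then for every pair α, β the Poisson bracket {H_α, H_β} is a constant function on ℝ^N × ℝ^N. -/
noncomputable section

/-- Gradient `∂H/∂x` of a function `H(x,p)` on phase space, in the `x`-slot. -/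
def gradQ {N : ℕ} (H : (Fin N → ℝ) → (Fin N → ℝ) → ℝ) (a b : Fin N → ℝ) : Fin N → ℝ :=
  fun j => fderiv ℝ (fun a' => H a' b) a (Pi.single j 1)

/-- Gradient `∂H/∂p` of a function `H(x,p)` on phase space, in the `p`-slot. -/
def gradP {N : ℕ} (H : (Fin N → ℝ) → (Fin N → ℝ) → ℝ) (a b : Fin N → ℝ) : Fin N → ℝ :=
  fun j => fderiv ℝ (fun b' => H a b') b (Pi.single j 1)

/-- Canonical Poisson bracket `{F,G} = ⟨∂F/∂x, ∂G/∂p⟩ − ⟨∂F/∂p, ∂G/∂x⟩`. -/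
def poisson {N : ℕ} (F G : (Fin N → ℝ) → (Fin N → ℝ) → ℝ) (a b : Fin N → ℝ) : ℝ :=
  ∑ j, (gradQ F a b j * gradP G a b j - gradP F a b j * gradQ G a b j)

namespace PoissonAux

theorem one_le_inf : ((⊤ : ℕ∞) : WithTop ℕ∞) ≠ 0 := by simp

theorem inf_add_one_le : ((⊤ : ℕ∞) : WithTop ℕ∞) + 1 ≤ ((⊤ : ℕ∞) : WithTop ℕ∞) := by
  exact_mod_cast le_top

variable {N : ℕ}

/-- Phase space. -/
abbrev PS (N : ℕ) := (Fin N → ℝ) × (Fin N → ℝ)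

/-- `q`-basis vectors of phase space. -/
def eQ (j : Fin N) : PS N := (Pi.single j 1, 0)

/-- `p`-basis vectors of phase space. -/
def eP (j : Fin N) : PS N := (0, Pi.single j 1)

/-- Decomposition of a continuous linear functional on phase space over the basis. -/
theorem clm_decomp (L : PS N →L[ℝ] ℝ) (w : PS N) :
    L w = ∑ j, w.1 j * L (eQ j) + ∑ j, w.2 j * L (eP j) := by
  have hw : w = (∑ j, w.1 j • eQ j) + ∑ j, w.2 j • eP j := by
    rw [Prod.ext_iff]
    constructor
    · funext i
      simp [eQ, eP, Prod.fst_sum, Finset.sum_apply, Pi.single_apply]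
    · funext i
      simp [eQ, eP, Prod.snd_sum, Finset.sum_apply, Pi.single_apply]
  conv_lhs => rw [hw]
  rw [map_add, map_sum, map_sum]
  simp [smul_eq_mul]

/-- Two continuous linear functionals agreeing on the basis agree everywhere. -/
theorem clm_eq_on (L₁ L₂ : PS N →L[ℝ] ℝ) (hQ : ∀ j, L₁ (eQ j) = L₂ (eQ j))
    (hP : ∀ j, L₁ (eP j) = L₂ (eP j)) (w : PS N) : L₁ w = L₂ w := by
  rw [clm_decomp L₁ w, clm_decomp L₂ w]
  simp only [hQ, hP]

/-- Hamiltonian vector field of a function on phase space. -/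
def hamVF (A : PS N → ℝ) (q : PS N) : PS N :=
  (fun j => fderiv ℝ A q (eP j), fun j => -(fderiv ℝ A q (eQ j)))

section general

variable {X Y Z : Type*} [NormedAddCommGroup X] [NormedSpace ℝ X]
  [NormedAddCommGroup Y] [NormedSpace ℝ Y] [NormedAddCommGroup Z] [NormedSpace ℝ Z]

theorem comp_fderiv_hasFDerivAt {f : X → Y} (hf : ContDiff ℝ (⊤ : ℕ∞) f)
    (T : (X →L[ℝ] Y) →L[ℝ] Z) (q : X) :
    HasFDerivAt (fun q' => T (fderiv ℝ f q')) (T.comp (fderiv ℝ (fderiv ℝ f) q)) q :=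
  T.hasFDerivAt.comp q (((hf.fderiv_right inf_add_one_le).differentiable one_le_inf) q).hasFDerivAt

theorem fderiv_apply_hasFDerivAt {f : X → Y} (hf : ContDiff ℝ (⊤ : ℕ∞) f)
    (c : X) (q : X) :
    HasFDerivAt (fun q' => fderiv ℝ f q' c)
      ((ContinuousLinearMap.apply ℝ Y c).comp (fderiv ℝ (fderiv ℝ f) q)) q :=
  comp_fderiv_hasFDerivAt hf (ContinuousLinearMap.apply ℝ Y c) q

theorem second_symm {f : X → Y} (hf : ContDiff ℝ (⊤ : ℕ∞) f) (q : X) (v w : X) :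
    fderiv ℝ (fderiv ℝ f) q v w = fderiv ℝ (fderiv ℝ f) q w v :=
  second_derivative_symmetric
    (fun y => ((hf.differentiable one_le_inf) y).hasFDerivAt)
    (((hf.fderiv_right inf_add_one_le).differentiable one_le_inf) q).hasFDerivAt v w

end general

/-- The key computation: if the second derivatives satisfy the commuting-flow identity,
then the Poisson-bracket-like function has vanishing derivative, hence is constant. -/
theorem bracket_const (A B : PS N → ℝ) (hA : ContDiff ℝ (⊤ : ℕ∞) A)
    (hB : ContDiff ℝ (⊤ : ℕ∞) B)
    (hkey : ∀ q : PS N, ∀ v : PS N,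
      fderiv ℝ (fderiv ℝ A) q (hamVF B q) v = fderiv ℝ (fderiv ℝ B) q (hamVF A q) v) :
    ∀ q q' : PS N,
      (∑ j, (fderiv ℝ A q (eQ j) * fderiv ℝ B q (eP j)
        - fderiv ℝ A q (eP j) * fderiv ℝ B q (eQ j)))
      = ∑ j, (fderiv ℝ A q' (eQ j) * fderiv ℝ B q' (eP j)
        - fderiv ℝ A q' (eP j) * fderiv ℝ B q' (eQ j)) := by
  set D2A := fderiv ℝ (fderiv ℝ A) with hD2A
  set D2B := fderiv ℝ (fderiv ℝ B) with hD2B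
  set K : PS N → ℝ := fun q => ∑ j, (fderiv ℝ A q (eQ j) * fderiv ℝ B q (eP j)
    - fderiv ℝ A q (eP j) * fderiv ℝ B q (eQ j)) with hK
  have hKd : ∀ q : PS N, HasFDerivAt K
      (∑ j, ((fderiv ℝ A q (eQ j) • ((ContinuousLinearMap.apply ℝ ℝ (eP j)).comp (D2B q))
          + fderiv ℝ B q (eP j) • ((ContinuousLinearMap.apply ℝ ℝ (eQ j)).comp (D2A q)))
        - (fderiv ℝ A q (eP j) • ((ContinuousLinearMap.apply ℝ ℝ (eQ j)).comp (D2B q))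
          + fderiv ℝ B q (eQ j) • ((ContinuousLinearMap.apply ℝ ℝ (eP j)).comp (D2A q))))) q := by
    intro q
    apply HasFDerivAt.fun_sum
    intro j _
    exact ((fderiv_apply_hasFDerivAt hA (eQ j) q).mul
        (fderiv_apply_hasFDerivAt hB (eP j) q)).sub
      ((fderiv_apply_hasFDerivAt hA (eP j) q).mul
        (fderiv_apply_hasFDerivAt hB (eQ j) q))
  have hzero : ∀ q : PS N, ∀ v : PS N,
      (∑ j, ((fderiv ℝ A q (eQ j) • ((ContinuousLinearMap.apply ℝ ℝ (eP j)).comp (D2B q))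
          + fderiv ℝ B q (eP j) • ((ContinuousLinearMap.apply ℝ ℝ (eQ j)).comp (D2A q)))
        - (fderiv ℝ A q (eP j) • ((ContinuousLinearMap.apply ℝ ℝ (eQ j)).comp (D2B q))
          + fderiv ℝ B q (eQ j) • ((ContinuousLinearMap.apply ℝ ℝ (eP j)).comp (D2A q))))) v
      = 0 := by
    intro q v
    have hSv : (∑ j, ((fderiv ℝ A q (eQ j) • ((ContinuousLinearMap.apply ℝ ℝ (eP j)).comp (D2B q))
          + fderiv ℝ B q (eP j) • ((ContinuousLinearMap.apply ℝ ℝ (eQ j)).comp (D2A q)))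
        - (fderiv ℝ A q (eP j) • ((ContinuousLinearMap.apply ℝ ℝ (eQ j)).comp (D2B q))
          + fderiv ℝ B q (eQ j) • ((ContinuousLinearMap.apply ℝ ℝ (eP j)).comp (D2A q))))) v
        = ∑ j, ((fderiv ℝ A q (eQ j) * D2B q v (eP j)
            + fderiv ℝ B q (eP j) * D2A q v (eQ j))
          - (fderiv ℝ A q (eP j) * D2B q v (eQ j)
            + fderiv ℝ B q (eQ j) * D2A q v (eP j))) := by
      simp [ContinuousLinearMap.sum_apply, ContinuousLinearMap.apply_apply, smul_eq_mul]
    rw [hSv]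
    have h1 : D2A q (hamVF B q) v
        = ∑ j, (fderiv ℝ B q (eP j) * D2A q (eQ j) v
            - fderiv ℝ B q (eQ j) * D2A q (eP j) v) := by
      rw [show D2A q (hamVF B q) v = ((D2A q).flip v) (hamVF B q) from rfl,
        clm_decomp ((D2A q).flip v) (hamVF B q), ← Finset.sum_add_distrib]
      refine Finset.sum_congr rfl fun j _ => ?_
      simp [hamVF]
      ring
    have h2 : D2B q (hamVF A q) v
        = ∑ j, (fderiv ℝ A q (eP j) * D2B q (eQ j) v
            - fderiv ℝ A q (eQ j) * D2B q (eP j) v) := by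
      rw [show D2B q (hamVF A q) v = ((D2B q).flip v) (hamVF A q) from rfl,
        clm_decomp ((D2B q).flip v) (hamVF A q), ← Finset.sum_add_distrib]
      refine Finset.sum_congr rfl fun j _ => ?_
      simp [hamVF]
      ring
    have hmain : (∑ j, ((fderiv ℝ A q (eQ j) * D2B q v (eP j)
            + fderiv ℝ B q (eP j) * D2A q v (eQ j))
          - (fderiv ℝ A q (eP j) * D2B q v (eQ j)
            + fderiv ℝ B q (eQ j) * D2A q v (eP j))))
        = D2A q (hamVF B q) v - D2B q (hamVF A q) v := by
      rw [h1, h2, ← Finset.sum_sub_distrib]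
      refine Finset.sum_congr rfl fun j _ => ?_
      rw [hD2A, hD2B, second_symm hA q v (eQ j), second_symm hA q v (eP j),
        second_symm hB q v (eQ j), second_symm hB q v (eP j)]
      ring
    rw [hmain, hkey q v, sub_self]
  have hKd0 : ∀ q : PS N, HasFDerivAt K (0 : PS N →L[ℝ] ℝ) q := by
    intro q
    have := hKd q
    refine this.congr_fderiv ?_
    refine ContinuousLinearMap.ext fun v => ?_
    rw [hzero q v]
    simp
  intro q q'
  exact is_const_of_fderiv_eq_zero (fun q => (hKd0 q).differentiableAt)
    (fun q => (hKd0 q).fderiv.trans rfl) q q'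

end PoissonAux

open PoissonAux in
/-- Slice gradients are directional derivatives of the joint function. -/
theorem gradQ_eq {N : ℕ} (Hf : (Fin N → ℝ) → (Fin N → ℝ) → ℝ)
    (h : ContDiff ℝ (⊤ : ℕ∞) (fun q : PS N => Hf q.1 q.2)) (a b : Fin N → ℝ) :
    gradQ Hf a b = fun j => fderiv ℝ (fun q : PS N => Hf q.1 q.2) (a, b) (eQ j) := by
  funext j
  have hd : HasFDerivAt (fun q : PS N => Hf q.1 q.2)
      (fderiv ℝ (fun q : PS N => Hf q.1 q.2) (a, b)) (a, b) :=
    ((h.differentiable one_le_inf) (a, b)).hasFDerivAt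
  have h2 := hd.comp a (hasFDerivAt_prodMk_left (𝕜 := ℝ) a b)
  have h3 : fderiv ℝ (fun a' => Hf a' b) a
      = (fderiv ℝ (fun q : PS N => Hf q.1 q.2) (a, b)).comp
        (ContinuousLinearMap.inl ℝ (Fin N → ℝ) (Fin N → ℝ)) := h2.fderiv
  show fderiv ℝ (fun a' => Hf a' b) a (Pi.single j 1) = _
  rw [h3]
  rfl

open PoissonAux in
theorem gradP_eq {N : ℕ} (Hf : (Fin N → ℝ) → (Fin N → ℝ) → ℝ)
    (h : ContDiff ℝ (⊤ : ℕ∞) (fun q : PS N => Hf q.1 q.2)) (a b : Fin N → ℝ) :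
    gradP Hf a b = fun j => fderiv ℝ (fun q : PS N => Hf q.1 q.2) (a, b) (eP j) := by
  funext j
  have hd : HasFDerivAt (fun q : PS N => Hf q.1 q.2)
      (fderiv ℝ (fun q : PS N => Hf q.1 q.2) (a, b)) (a, b) :=
    ((h.differentiable one_le_inf) (a, b)).hasFDerivAt
  have h2 := hd.comp b (hasFDerivAt_prodMk_right a b)
  have h3 : fderiv ℝ (fun b' => Hf a b') b
      = (fderiv ℝ (fun q : PS N => Hf q.1 q.2) (a, b)).comp
        (ContinuousLinearMap.inr ℝ (Fin N → ℝ) (Fin N → ℝ)) := h2.fderiv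
  show fderiv ℝ (fun b' => Hf a b') b (Pi.single j 1) = _
  rw [h3]
  rfl

open PoissonAux in
/-- If for every initial point there exist smooth common solutions of all
`m` Hamiltonian flows with Hamilton functions `H_α`, then all pairwise Poisson brackets
`{H_α, H_β}` are constant functions on phase space. -/
theorem poisson_const_of_commuting_flows {m N : ℕ}
    (H : Fin m → (Fin N → ℝ) → (Fin N → ℝ) → ℝ)
    (hH : ∀ α, ContDiff ℝ (⊤ : ℕ∞)
      (fun q : (Fin N → ℝ) × (Fin N → ℝ) => H α q.1 q.2))
    (hflows : ∀ x₀ p₀ : Fin N → ℝ, ∃ x p : (Fin m → ℝ) → (Fin N → ℝ),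
      ContDiff ℝ (⊤ : ℕ∞) x ∧ ContDiff ℝ (⊤ : ℕ∞) p ∧
      x 0 = x₀ ∧ p 0 = p₀ ∧
      ∀ (t : Fin m → ℝ) (α : Fin m),
        pdv x α t = gradP (H α) (x t) (p t) ∧
        pdv p α t = -gradQ (H α) (x t) (p t)) :
    ∀ α β : Fin m, ∃ c : ℝ, ∀ a b : Fin N → ℝ, poisson (H α) (H β) a b = c := by
  intro α β
  set A : Fin m → PS N → ℝ := fun γ q => H γ q.1 q.2 with hAdef
  have hA : ∀ γ, ContDiff ℝ (⊤ : ℕ∞) (A γ) := hH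
  -- the key identity at every point
  have hkey : ∀ q : PS N, ∀ v : PS N,
      fderiv ℝ (fderiv ℝ (A α)) q (hamVF (A β) q) v
      = fderiv ℝ (fderiv ℝ (A β)) q (hamVF (A α) q) v := by
    intro q v
    obtain ⟨x, p, hx, hp, hx0, hp0, ham⟩ := hflows q.1 q.2
    set F : (Fin m → ℝ) → PS N := fun t => (x t, p t) with hFdef
    have hF : ContDiff ℝ (⊤ : ℕ∞) F := hx.prodMk hp
    have hF0 : F 0 = q := by rw [hFdef]; simp [hx0, hp0]
    have hFd : Differentiable ℝ F := hF.differentiable one_le_inf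
    -- derivative of F in coordinate direction γ is the Hamiltonian vector field
    have hflow : ∀ (t : Fin m → ℝ) (γ : Fin m),
        fderiv ℝ F t (Pi.single γ 1) = hamVF (A γ) (F t) := by
      intro t γ
      have hxp : fderiv ℝ F t = (fderiv ℝ x t).prod (fderiv ℝ p t) :=
        DifferentiableAt.fderiv_prodMk (hx.differentiable one_le_inf t)
          (hp.differentiable one_le_inf t)
      rw [hxp]
      have h1 := (ham t γ).1
      have h2 := (ham t γ).2
      rw [gradP_eq (H γ) (hH γ) (x t) (p t)] at h1
      rw [gradQ_eq (H γ) (hH γ) (x t) (p t)] at h2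
      have : ((fderiv ℝ x t).prod (fderiv ℝ p t)) (Pi.single γ 1)
          = (pdv x γ t, pdv p γ t) := rfl
      rw [this, h1, h2, hamVF]
      refine Prod.ext rfl ?_
      funext j
      simp
      rfl
    -- mixed partials of x give the eP-part of the identity
    have hxpart : ∀ (γ δ : Fin m) (j : Fin N),
        fderiv ℝ (fderiv ℝ (A δ)) q (hamVF (A γ) q) (eP j)
        = fderiv ℝ (fderiv ℝ x) 0 (Pi.single γ 1) (Pi.single δ 1) j := by
      intro γ δ j
      -- the scalar function t ↦ (∂_δ x)_j(t), two ways
      have heq : (fun t => fderiv ℝ x t (Pi.single δ 1) j)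
          = fun t => fderiv ℝ (A δ) (F t) (eP j) := by
        funext t
        have h1 := (ham t δ).1
        rw [gradP_eq (H δ) (hH δ) (x t) (p t)] at h1
        have : fderiv ℝ x t (Pi.single δ 1) = pdv x δ t := rfl
        rw [this, h1]
      have hL : HasFDerivAt (fun t => fderiv ℝ x t (Pi.single δ 1) j)
          (((ContinuousLinearMap.proj j).comp
              (ContinuousLinearMap.apply ℝ (Fin N → ℝ) (Pi.single δ 1))).comp
            (fderiv ℝ (fderiv ℝ x) 0)) 0 :=
        comp_fderiv_hasFDerivAt hx
          ((ContinuousLinearMap.proj j).comp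
            (ContinuousLinearMap.apply ℝ (Fin N → ℝ) (Pi.single δ 1))) 0
      have hR : HasFDerivAt (fun t => fderiv ℝ (A δ) (F t) (eP j))
          (((ContinuousLinearMap.apply ℝ ℝ (eP j)).comp
              (fderiv ℝ (fderiv ℝ (A δ)) q)).comp (fderiv ℝ F 0)) 0 := by
        have := (fderiv_apply_hasFDerivAt (hA δ) (eP j) (F 0)).comp 0
          ((hFd 0).hasFDerivAt)
        rwa [hF0] at this
      rw [heq] at hL
      have huniq := hL.unique hR
      have h := ContinuousLinearMap.ext_iff.mp huniq (Pi.single γ 1)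
      simp only [ContinuousLinearMap.comp_apply, ContinuousLinearMap.apply_apply,
        ContinuousLinearMap.proj_apply] at h
      rw [hflow 0 γ, hF0] at h
      exact h.symm
    -- mixed partials of p give the eQ-part of the identity
    have hppart : ∀ (γ δ : Fin m) (j : Fin N),
        -(fderiv ℝ (fderiv ℝ (A δ)) q (hamVF (A γ) q) (eQ j))
        = fderiv ℝ (fderiv ℝ p) 0 (Pi.single γ 1) (Pi.single δ 1) j := by
      intro γ δ j
      have heq : (fun t => fderiv ℝ p t (Pi.single δ 1) j)
          = fun t => -(fderiv ℝ (A δ) (F t) (eQ j)) := by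
        funext t
        have h2 := (ham t δ).2
        rw [gradQ_eq (H δ) (hH δ) (x t) (p t)] at h2
        have : fderiv ℝ p t (Pi.single δ 1) = pdv p δ t := rfl
        rw [this, h2]
        simp
        rfl
      have hL : HasFDerivAt (fun t => fderiv ℝ p t (Pi.single δ 1) j)
          (((ContinuousLinearMap.proj j).comp
              (ContinuousLinearMap.apply ℝ (Fin N → ℝ) (Pi.single δ 1))).comp
            (fderiv ℝ (fderiv ℝ p) 0)) 0 :=
        comp_fderiv_hasFDerivAt hp
          ((ContinuousLinearMap.proj j).comp
            (ContinuousLinearMap.apply ℝ (Fin N → ℝ) (Pi.single δ 1))) 0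
      have hR : HasFDerivAt (fun t => -(fderiv ℝ (A δ) (F t) (eQ j)))
          (-(((ContinuousLinearMap.apply ℝ ℝ (eQ j)).comp
              (fderiv ℝ (fderiv ℝ (A δ)) q)).comp (fderiv ℝ F 0))) 0 := by
        have := ((fderiv_apply_hasFDerivAt (hA δ) (eQ j) (F 0)).comp 0
          ((hFd 0).hasFDerivAt)).neg
        rwa [hF0] at this
      rw [heq] at hL
      have huniq := hL.unique hR
      have h := ContinuousLinearMap.ext_iff.mp huniq (Pi.single γ 1)
      simp only [ContinuousLinearMap.comp_apply, ContinuousLinearMap.apply_apply,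
        ContinuousLinearMap.proj_apply, ContinuousLinearMap.neg_apply] at h
      rw [hflow 0 γ, hF0] at h
      exact h.symm
    -- assemble the identity on the basis and extend by linearity
    have hQ : ∀ j, fderiv ℝ (fderiv ℝ (A α)) q (hamVF (A β) q) (eQ j)
        = fderiv ℝ (fderiv ℝ (A β)) q (hamVF (A α) q) (eQ j) := by
      intro j
      have h1 := hppart β α j
      have h2 := hppart α β j
      have h3 : fderiv ℝ (fderiv ℝ p) 0 (Pi.single β 1) (Pi.single α 1) j
          = fderiv ℝ (fderiv ℝ p) 0 (Pi.single α 1) (Pi.single β 1) j :=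
        congrFun (second_symm hp 0 (Pi.single β 1) (Pi.single α 1)) j
      have := h1.trans (h3.trans h2.symm)
      exact neg_injective this
    have hP : ∀ j, fderiv ℝ (fderiv ℝ (A α)) q (hamVF (A β) q) (eP j)
        = fderiv ℝ (fderiv ℝ (A β)) q (hamVF (A α) q) (eP j) := by
      intro j
      have h1 := hxpart β α j
      have h2 := hxpart α β j
      have h3 : fderiv ℝ (fderiv ℝ x) 0 (Pi.single β 1) (Pi.single α 1) j
          = fderiv ℝ (fderiv ℝ x) 0 (Pi.single α 1) (Pi.single β 1) j :=
        congrFun (second_symm hx 0 (Pi.single β 1) (Pi.single α 1)) j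
      exact h1.trans (h3.trans h2.symm)
    exact clm_eq_on _ _ hQ hP v
  -- conclude: the bracket is constant
  refine ⟨∑ j, (fderiv ℝ (A α) (0, 0) (eQ j) * fderiv ℝ (A β) (0, 0) (eP j)
    - fderiv ℝ (A α) (0, 0) (eP j) * fderiv ℝ (A β) (0, 0) (eQ j)), ?_⟩
  intro a b
  have hpois : poisson (H α) (H β) a b
      = ∑ j, (fderiv ℝ (A α) (a, b) (eQ j) * fderiv ℝ (A β) (a, b) (eP j)
        - fderiv ℝ (A α) (a, b) (eP j) * fderiv ℝ (A β) (a, b) (eQ j)) := by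
    unfold poisson
    rw [gradQ_eq (H α) (hH α) a b, gradP_eq (H α) (hH α) a b,
      gradQ_eq (H β) (hH β) a b, gradP_eq (H β) (hH β) a b]
  rw [hpois]
  exact bracket_const (A α) (A β) (hA α) (hA β) hkey (a, b) (0, 0)
end
end

section
/- Suppose the multi-time Lagrangian 1-form is Legendre transformable, i.e., there exist smooth functions V_1, …, V_m : ℝ^N × ℝ^N → ℝ^N such that for all (x,p): ∂L_α/∂v_β(x, V_1(x,p), …, V_m(x,p)) = 0 for all α ≠ β and ∂L_α/∂v_α(x, V_1(x,p), …, V_m(x,p)) = p for all α, and define H_α(x,p) = ⟨p, V_α(x,p)⟩ − L_α(x, V_1(x,p), …, V_m(x,p)). Let x, p : ℝ^m → ℝ^N be smooth solutions of the multi-time Euler–Lagrange equations, i.e., x_{t_α} = V_α(x,p) and ∂p/∂t_α = ∂L_α/∂x(x, x_{t_1}, …, x_{t_m}) for all α. Then for all α, β and all t ∈ ℝ^m: ∂/∂t_α [L_β(x, x_{t_1}, …, x_{t_m})] − ∂/∂t_β [L_α(x, x_{t_1}, …, x_{t_m})] = {H_α, H_β}(x(t), p(t)). -/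
noncomputable section

/-- Partial derivative `∂f/∂t_α` of a scalar function of multi-time. -/
def pdvS {m : ℕ} (f : (Fin m → ℝ) → ℝ) (α : Fin m) (t : Fin m → ℝ) : ℝ :=
  fderiv ℝ f t (Pi.single α 1)

/-! ### Auxiliary lemmas -/

section Aux

variable {E F G : Type*} [NormedAddCommGroup E] [NormedSpace ℝ E]
  [NormedAddCommGroup F] [NormedSpace ℝ F] [NormedAddCommGroup G] [NormedSpace ℝ G]

lemma clm_expand {N : ℕ} (φ : (Fin N → ℝ) →L[ℝ] ℝ) (w : Fin N → ℝ) :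
    φ w = ∑ j, w j * φ (Pi.single j 1) := by
  have hw : w = ∑ j, w j • (Pi.single j 1 : Fin N → ℝ) := by
    ext i
    simp [Pi.single_apply]
  rw [show φ w = φ (∑ j, w j • (Pi.single j 1 : Fin N → ℝ)) by rw [← hw], map_sum]
  simp [smul_eq_mul]

lemma fderiv_comp_pair (f : F × G → ℝ) (hf : ContDiff ℝ (⊤:ℕ∞) f)
    (c : E → F) (g : E → G) (e : E) (hc : DifferentiableAt ℝ c e)
    (hg : DifferentiableAt ℝ g e) (u : E) :
    fderiv ℝ (fun e' => f (c e', g e')) e u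
      = fderiv ℝ (fun y => f (y, g e)) (c e) (fderiv ℝ c e u)
        + fderiv ℝ (fun z => f (c e, z)) (g e) (fderiv ℝ g e u) := by
  have hf' : HasFDerivAt f (fderiv ℝ f (c e, g e)) (c e, g e) :=
    (hf.differentiable (by simp) _).hasFDerivAt
  have h1 : HasFDerivAt (fun e' => f (c e', g e'))
      ((fderiv ℝ f (c e, g e)).comp ((fderiv ℝ c e).prod (fderiv ℝ g e))) e :=
    hf'.comp e (hc.hasFDerivAt.prodMk hg.hasFDerivAt)
  have h2 : fderiv ℝ (fun y => f (y, g e)) (c e)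
      = (fderiv ℝ f (c e, g e)).comp (ContinuousLinearMap.inl ℝ F G) :=
    (hf'.comp (c e) (hasFDerivAt_prodMk_left (c e) (g e))).fderiv
  have h3 : fderiv ℝ (fun z => f (c e, z)) (g e)
      = (fderiv ℝ f (c e, g e)).comp (ContinuousLinearMap.inr ℝ F G) :=
    (hf'.comp (g e) (hasFDerivAt_prodMk_right (c e) (g e))).fderiv
  rw [h1.fderiv, h2, h3]
  simp only [ContinuousLinearMap.comp_apply, ContinuousLinearMap.prod_apply,
    ContinuousLinearMap.inl_apply, ContinuousLinearMap.inr_apply]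
  rw [← map_add]
  congr 1
  simp [Prod.mk_add_mk]

lemma fderiv_pi_slot {m : ℕ} (f : (Fin m → F) → ℝ) (W : Fin m → F)
    (hf : DifferentiableAt ℝ f W) (w : Fin m → F) :
    fderiv ℝ f W w = ∑ γ, fderiv ℝ (fun v => f (Function.update W γ v)) (W γ) (w γ) := by
  have key : ∀ (γ : Fin m) (v : F),
      fderiv ℝ (fun v => f (Function.update W γ v)) (W γ) v
        = fderiv ℝ f W (Pi.single γ v) := by
    intro γ v
    have hu : Function.update W γ (W γ) = W := Function.update_eq_self _ _
    have hcomp : HasFDerivAt (fun v => f (Function.update W γ v))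
        ((fderiv ℝ f W).comp (.pi (Pi.single γ (.id ℝ F)))) (W γ) := by
      have h1 := hasFDerivAt_update (𝕜 := ℝ) W (i := γ) (W γ)
      have h2 : HasFDerivAt f (fderiv ℝ f W) (Function.update W γ (W γ)) := by
        rw [hu]; exact hf.hasFDerivAt
      exact h2.comp (W γ) h1
    rw [hcomp.fderiv]
    simp only [ContinuousLinearMap.coe_comp', Function.comp_apply]
    congr 1
    ext i
    rcases eq_or_ne i γ with h | h
    · subst h; simp
    · simp [Pi.single_apply, h]
  have hw : w = ∑ γ, Pi.single γ (w γ) := (Finset.univ_sum_single w).symm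
  rw [show fderiv ℝ f W w = fderiv ℝ f W (∑ γ, Pi.single γ (w γ)) by rw [← hw], map_sum]
  exact Finset.sum_congr rfl fun γ _ => (key γ (w γ)).symm

lemma chain_master {m N : ℕ} (L : (Fin N → ℝ) → (Fin m → (Fin N → ℝ)) → ℝ)
    (hL : ContDiff ℝ (⊤:ℕ∞) (fun q : (Fin N → ℝ) × (Fin m → (Fin N → ℝ)) => L q.1 q.2))
    (c : E → (Fin N → ℝ)) (G : E → (Fin m → (Fin N → ℝ))) (e : E)
    (hc : DifferentiableAt ℝ c e) (hG : DifferentiableAt ℝ G e) (u : E) :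
    fderiv ℝ (fun e' => L (c e') (G e')) e u
      = (∑ j, fderiv ℝ c e u j * gradX L (c e) (G e) j)
        + ∑ γ, ∑ j, fderiv ℝ G e u γ j * gradV L γ (c e) (G e) j := by
  have h : fderiv ℝ (fun e' => L (c e') (G e')) e u
      = fderiv ℝ (fun y => L y (G e)) (c e) (fderiv ℝ c e u)
        + fderiv ℝ (fun z => L (c e) z) (G e) (fderiv ℝ G e u) :=
    fderiv_comp_pair (fun q => L q.1 q.2) hL c G e hc hG u
  rw [h]
  simp only [gradX, gradV]
  congr 1
  · exact clm_expand (fderiv ℝ (fun y => L y (G e)) (c e)) (fderiv ℝ c e u)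
  · have hdiff2 : DifferentiableAt ℝ (fun z => L (c e) z) (G e) := by
      exact ((hL.differentiable (by simp)) (c e, G e)).comp (G e)
        ((differentiableAt_const (c e)).prodMk differentiableAt_id)
    rw [fderiv_pi_slot (fun z => L (c e) z) (G e) hdiff2 (fderiv ℝ G e u)]
    exact Finset.sum_congr rfl fun γ _ => clm_expand
      (fderiv ℝ (fun w => L (c e) (Function.update (G e) γ w)) (G e γ)) (fderiv ℝ G e u γ)

lemma single_sum {N : ℕ} (c : Fin N → ℝ) (j : Fin N) :
    ∑ i, (Pi.single j 1 : Fin N → ℝ) i * c i = c j := by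
  simp [Pi.single_apply]

lemma fderiv_component {N : ℕ} (f : E → (Fin N → ℝ)) (e : E)
    (hf : DifferentiableAt ℝ f e) (i : Fin N) (u : E) :
    fderiv ℝ (fun y => f y i) e u = fderiv ℝ f e u i := by
  have h : HasFDerivAt (fun y => f y i)
      ((ContinuousLinearMap.proj (R := ℝ) (φ := fun _ : Fin N => ℝ) i).comp (fderiv ℝ f e)) e :=
    HasFDerivAt.comp (𝕜 := ℝ)
      (f := f) (g := fun w : Fin N → ℝ => w i)
      (g' := ContinuousLinearMap.proj (R := ℝ) (φ := fun _ : Fin N => ℝ) i) e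
      (hasFDerivAt_apply (𝕜 := ℝ) i (f e)) hf.hasFDerivAt
  rw [h.fderiv]; rfl

end Aux

/-- For a Legendre transformable multi-time Lagrangian 1-form and a smooth
solution `(x,p)` of the multi-time Euler–Lagrange equations,
`∂_{t_α} L_β − ∂_{t_β} L_α = {H_α, H_β}` along the solution. -/
theorem almost_closedness {m N : ℕ}
    (L : Fin m → (Fin N → ℝ) → (Fin m → (Fin N → ℝ)) → ℝ)
    (hL : ∀ α, ContDiff ℝ (⊤ : ℕ∞)
      (fun q : (Fin N → ℝ) × (Fin m → (Fin N → ℝ)) => L α q.1 q.2))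
    (V : Fin m → (Fin N → ℝ) → (Fin N → ℝ) → (Fin N → ℝ))
    (hV : ∀ α, ContDiff ℝ (⊤ : ℕ∞)
      (fun q : (Fin N → ℝ) × (Fin N → ℝ) => V α q.1 q.2))
    (hLeg1 : ∀ (a b : Fin N → ℝ) (α β : Fin m), α ≠ β →
      gradV (L α) β a (fun γ => V γ a b) = 0)
    (hLeg2 : ∀ (a b : Fin N → ℝ) (α : Fin m),
      gradV (L α) α a (fun γ => V γ a b) = b)
    (H : Fin m → (Fin N → ℝ) → (Fin N → ℝ) → ℝ)
    (hH : ∀ (α : Fin m) (a b : Fin N → ℝ),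
      H α a b = (∑ j, b j * V α a b j) - L α a (fun γ => V γ a b))
    (x p : (Fin m → ℝ) → (Fin N → ℝ))
    (hx : ContDiff ℝ (⊤ : ℕ∞) x) (hp : ContDiff ℝ (⊤ : ℕ∞) p)
    (hEL1 : ∀ (t : Fin m → ℝ) (α : Fin m), pdv x α t = V α (x t) (p t))
    (hEL2 : ∀ (t : Fin m → ℝ) (α : Fin m), pdv p α t = gradX (L α) (x t) (jet x t)) :
    ∀ (α β : Fin m) (t : Fin m → ℝ),
      pdvS (fun s => L β (x s) (jet x s)) α t - pdvS (fun s => L α (x s) (jet x s)) β t =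
        poisson (H α) (H β) (x t) (p t) := by
  intro α β t
  -- basic differentiability
  have hxd : Differentiable ℝ x := hx.differentiable (by simp)
  have hx' : ContDiff ℝ (⊤ : ℕ∞) (fderiv ℝ x) := by
    have := (contDiff_infty_iff_fderiv (𝕜 := ℝ) (f := x)).mp (by exact_mod_cast hx)
    exact_mod_cast this.2
  have hx'd : Differentiable ℝ (fderiv ℝ x) := hx'.differentiable (by simp)
  have hVd : ∀ γ, Differentiable ℝ (fun q : (Fin N → ℝ) × (Fin N → ℝ) => V γ q.1 q.2) :=
    fun γ => (hV γ).differentiable (by simp)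
  have hVleft : ∀ (γ : Fin m) (b' : Fin N → ℝ), Differentiable ℝ (fun a' => V γ a' b') :=
    fun γ b' => (hVd γ).comp (differentiable_id.prodMk (differentiable_const b'))
  have hVright : ∀ (γ : Fin m) (a' : Fin N → ℝ), Differentiable ℝ (fun b' => V γ a' b') :=
    fun γ a' => (hVd γ).comp ((differentiable_const a').prodMk differentiable_id)
  have hVlefti : ∀ (γ : Fin m) (b' : Fin N → ℝ) (i : Fin N),
      Differentiable ℝ (fun a' => V γ a' b' i) :=
    fun γ b' i => differentiable_pi.mp (hVleft γ b') i
  have hVrighti : ∀ (γ : Fin m) (a' : Fin N → ℝ) (i : Fin N),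
      Differentiable ℝ (fun b' => V γ a' b' i) :=
    fun γ a' i => differentiable_pi.mp (hVright γ a') i
  -- jet facts
  have hjetHas : ∀ γ : Fin m, HasFDerivAt (fun s => jet x s γ)
      ((ContinuousLinearMap.apply ℝ (Fin N → ℝ) (Pi.single γ 1)).comp
        (fderiv ℝ (fderiv ℝ x) t)) t := by
    intro γ
    exact ((ContinuousLinearMap.apply ℝ (Fin N → ℝ) (Pi.single γ 1)).hasFDerivAt).comp t
      (hx'd t).hasFDerivAt
  have hjetHasAll : HasFDerivAt (jet x)
      (ContinuousLinearMap.pi (fun γ =>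
        (ContinuousLinearMap.apply ℝ (Fin N → ℝ) (Pi.single γ 1)).comp
          (fderiv ℝ (fderiv ℝ x) t))) t :=
    hasFDerivAt_pi.2 hjetHas
  have hjetdiff : DifferentiableAt ℝ (jet x) t := hjetHasAll.differentiableAt
  have hjetfd : ∀ (u : Fin m → ℝ) (γ : Fin m),
      fderiv ℝ (jet x) t u γ = fderiv ℝ (fderiv ℝ x) t u (Pi.single γ 1) := by
    intro u γ
    rw [hjetHasAll.fderiv]
    rfl
  have hsymm : ∀ u w : Fin m → ℝ,
      fderiv ℝ (fderiv ℝ x) t u w = fderiv ℝ (fderiv ℝ x) t w u :=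
    fun u w => second_derivative_symmetric (fun s => (hxd s).hasFDerivAt)
      ((hx'd t).hasFDerivAt) u w
  -- collapse of gradV along the solution
  have hgV : ∀ δ γ : Fin m, gradV (L δ) γ (x t) (fun γ' => V γ' (x t) (p t))
      = if γ = δ then p t else 0 := by
    intro δ γ
    rcases eq_or_ne γ δ with h | h
    · subst h; simp [hLeg2 (x t) (p t) γ]
    · simp [h, hLeg1 (x t) (p t) δ γ (Ne.symm h)]
  -- Claim A: time derivative of L δ along the solution
  have claimA : ∀ δ σ : Fin m, pdvS (fun s => L δ (x s) (jet x s)) σ t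
      = (∑ j, V σ (x t) (p t) j * gradX (L δ) (x t) (fun γ => V γ (x t) (p t)) j)
        + ∑ j, fderiv ℝ (fderiv ℝ x) t (Pi.single σ 1) (Pi.single δ 1) j * p t j := by
    intro δ σ
    have hch := chain_master (L δ) (hL δ) x (jet x) t (hxd t) hjetdiff (Pi.single σ 1)
    have hjet_t : jet x t = fun γ => V γ (x t) (p t) := funext fun γ => hEL1 t γ
    have hpdvσ : fderiv ℝ x t (Pi.single σ 1) = V σ (x t) (p t) := hEL1 t σ
    simp only [pdvS]
    rw [hch, hjet_t]
    congr 1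
    · exact Finset.sum_congr rfl fun j _ => by rw [hpdvσ]
    · have hz : ∀ γ ∈ Finset.univ, γ ≠ δ →
          (∑ j, fderiv ℝ (jet x) t (Pi.single σ 1) γ j
            * gradV (L δ) γ (x t) (fun γ' => V γ' (x t) (p t)) j) = 0 := by
        intro γ _ hγ
        simp [hgV δ γ, hγ]
      rw [Finset.sum_eq_single_of_mem δ (Finset.mem_univ δ) hz]
      refine Finset.sum_congr rfl fun j _ => ?_
      rw [hjetfd (Pi.single σ 1) δ, hgV δ δ]
      simp
  -- Claim Q: gradQ of H δ
  have claimQ : ∀ (δ : Fin m) (j : Fin N), gradQ (H δ) (x t) (p t) j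
      = - gradX (L δ) (x t) (fun γ => V γ (x t) (p t)) j := by
    intro δ j
    have hfun : (fun a' => H δ a' (p t))
        = fun a' => (∑ i, p t i * V δ a' (p t) i) - L δ a' (fun γ => V γ a' (p t)) :=
      funext fun a' => hH δ a' (p t)
    have hGqHas : HasFDerivAt (fun a' => (fun γ => V γ a' (p t)))
        (ContinuousLinearMap.pi (fun γ => fderiv ℝ (fun a' => V γ a' (p t)) (x t))) (x t) :=
      hasFDerivAt_pi.2 fun γ => ((hVleft γ (p t)) (x t)).hasFDerivAt
    have hGqfd : ∀ (u : Fin N → ℝ) (γ : Fin m),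
        fderiv ℝ (fun a' => (fun γ' => V γ' a' (p t))) (x t) u γ
          = fderiv ℝ (fun a' => V γ a' (p t)) (x t) u := by
      intro u γ
      rw [hGqHas.fderiv]
      rfl
    have hd1 : DifferentiableAt ℝ (fun a' => ∑ i, p t i * V δ a' (p t) i) (x t) :=
      DifferentiableAt.fun_sum fun i _ =>
        (differentiableAt_const (p t i)).mul ((hVlefti δ (p t) i) (x t))
    have hd2 : DifferentiableAt ℝ (fun a' => L δ a' (fun γ => V γ a' (p t))) (x t) :=
      by have h := (((hL δ).differentiable (by simp)) (x t, fun γ => V γ (x t) (p t))).comp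
          (x t) (differentiableAt_id.prodMk hGqHas.differentiableAt)
         exact h
    have ht1 : fderiv ℝ (fun a' => ∑ i, p t i * V δ a' (p t) i) (x t) (Pi.single j 1)
        = ∑ i, p t i * fderiv ℝ (fun a' => V δ a' (p t)) (x t) (Pi.single j 1) i := by
      rw [fderiv_fun_sum (A := fun i a' => p t i * V δ a' (p t) i) fun i _ =>
        (differentiableAt_const (p t i)).mul ((hVlefti δ (p t) i) (x t))]
      rw [ContinuousLinearMap.sum_apply]
      refine Finset.sum_congr rfl fun i _ => ?_
      rw [fderiv_const_mul ((hVlefti δ (p t) i) (x t)) (p t i)]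
      rw [ContinuousLinearMap.smul_apply, smul_eq_mul,
        fderiv_component (fun a' => V δ a' (p t)) (x t) ((hVleft δ (p t)) (x t)) i]
    have ht2 : fderiv ℝ (fun a' => L δ a' (fun γ => V γ a' (p t))) (x t) (Pi.single j 1)
        = gradX (L δ) (x t) (fun γ => V γ (x t) (p t)) j
          + ∑ i, p t i * fderiv ℝ (fun a' => V δ a' (p t)) (x t) (Pi.single j 1) i := by
      have hch := chain_master (L δ) (hL δ) (fun a' => a') (fun a' => (fun γ => V γ a' (p t)))
        (x t) differentiableAt_fun_id hGqHas.differentiableAt (Pi.single j 1)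
      rw [hch]
      congr 1
      · rw [fderiv_id']
        exact single_sum _ j
      · have hz : ∀ γ ∈ Finset.univ, γ ≠ δ →
            (∑ i, fderiv ℝ (fun a' => (fun γ' => V γ' a' (p t))) (x t) (Pi.single j 1) γ i
              * gradV (L δ) γ (x t) (fun γ' => V γ' (x t) (p t)) i) = 0 := by
          intro γ _ hγ
          simp [hgV δ γ, hγ]
        rw [Finset.sum_eq_single_of_mem δ (Finset.mem_univ δ) hz]
        refine Finset.sum_congr rfl fun i _ => ?_
        rw [hGqfd (Pi.single j 1) δ, hgV δ δ]
        simp [mul_comm]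
    simp only [gradQ]
    rw [hfun, fderiv_fun_sub hd1 hd2, ContinuousLinearMap.sub_apply, ht1, ht2]
    ring
  -- Claim P: gradP of H δ
  have claimP : ∀ (δ : Fin m) (j : Fin N), gradP (H δ) (x t) (p t) j
      = V δ (x t) (p t) j := by
    intro δ j
    have hfun : (fun b' => H δ (x t) b')
        = fun b' => (∑ i, b' i * V δ (x t) b' i) - L δ (x t) (fun γ => V γ (x t) b') :=
      funext fun b' => hH δ (x t) b'
    have hGpHas : HasFDerivAt (fun b' => (fun γ => V γ (x t) b'))
        (ContinuousLinearMap.pi (fun γ => fderiv ℝ (fun b' => V γ (x t) b') (p t))) (p t) :=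
      hasFDerivAt_pi.2 fun γ => ((hVright γ (x t)) (p t)).hasFDerivAt
    have hGpfd : ∀ (u : Fin N → ℝ) (γ : Fin m),
        fderiv ℝ (fun b' => (fun γ' => V γ' (x t) b')) (p t) u γ
          = fderiv ℝ (fun b' => V γ (x t) b') (p t) u := by
      intro u γ
      rw [hGpHas.fderiv]
      rfl
    have hd1 : DifferentiableAt ℝ (fun b' => ∑ i, b' i * V δ (x t) b' i) (p t) :=
      DifferentiableAt.fun_sum fun i _ =>
        ((hasFDerivAt_apply (𝕜 := ℝ) i (p t)).differentiableAt).mul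
          ((hVrighti δ (x t) i) (p t))
    have hd2 : DifferentiableAt ℝ (fun b' => L δ (x t) (fun γ => V γ (x t) b')) (p t) :=
      by have h := (((hL δ).differentiable (by simp)) (x t, fun γ => V γ (x t) (p t))).comp
          (p t) ((differentiableAt_const (x t)).prodMk hGpHas.differentiableAt)
         exact h
    have ht1 : fderiv ℝ (fun b' => ∑ i, b' i * V δ (x t) b' i) (p t) (Pi.single j 1)
        = V δ (x t) (p t) j
          + ∑ i, p t i * fderiv ℝ (fun b' => V δ (x t) b') (p t) (Pi.single j 1) i := by
      rw [fderiv_fun_sum (A := fun i b' => b' i * V δ (x t) b' i) fun i _ =>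
        ((hasFDerivAt_apply (𝕜 := ℝ) i (p t)).differentiableAt).mul
          ((hVrighti δ (x t) i) (p t))]
      rw [ContinuousLinearMap.sum_apply]
      have hterm : ∀ i : Fin N,
          fderiv ℝ (fun b' => b' i * V δ (x t) b' i) (p t) (Pi.single j 1)
            = (Pi.single j 1 : Fin N → ℝ) i * V δ (x t) (p t) i
              + p t i * fderiv ℝ (fun b' => V δ (x t) b') (p t) (Pi.single j 1) i := by
        intro i
        rw [fderiv_fun_mul ((hasFDerivAt_apply (𝕜 := ℝ) i (p t)).differentiableAt)
          ((hVrighti δ (x t) i) (p t))]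
        rw [ContinuousLinearMap.add_apply, ContinuousLinearMap.smul_apply,
          ContinuousLinearMap.smul_apply, smul_eq_mul, smul_eq_mul]
        rw [(hasFDerivAt_apply (𝕜 := ℝ) i (p t)).fderiv,
          fderiv_component (fun b' => V δ (x t) b') (p t) ((hVright δ (x t)) (p t)) i]
        have : (ContinuousLinearMap.proj (R := ℝ) (φ := fun _ : Fin N => ℝ) i)
            (Pi.single j 1) = (Pi.single j 1 : Fin N → ℝ) i := rfl
        rw [this]
        ring
      rw [Finset.sum_congr rfl fun i _ => hterm i, Finset.sum_add_distrib, single_sum]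
    have ht2 : fderiv ℝ (fun b' => L δ (x t) (fun γ => V γ (x t) b')) (p t) (Pi.single j 1)
        = ∑ i, p t i * fderiv ℝ (fun b' => V δ (x t) b') (p t) (Pi.single j 1) i := by
      have hch := chain_master (L δ) (hL δ) (fun _ => x t) (fun b' => (fun γ => V γ (x t) b'))
        (p t) (differentiableAt_const (x t)) hGpHas.differentiableAt (Pi.single j 1)
      rw [hch, fderiv_fun_const]
      simp only [ContinuousLinearMap.zero_apply, Pi.zero_apply, zero_mul,
        Finset.sum_const_zero, zero_add]
      have hz : ∀ γ ∈ Finset.univ, γ ≠ δ →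
          (∑ i, fderiv ℝ (fun b' => (fun γ' => V γ' (x t) b')) (p t) (Pi.single j 1) γ i
            * gradV (L δ) γ (x t) (fun γ' => V γ' (x t) (p t)) i) = 0 := by
        intro γ _ hγ
        simp [hgV δ γ, hγ]
      rw [Finset.sum_eq_single_of_mem δ (Finset.mem_univ δ) hz]
      refine Finset.sum_congr rfl fun i _ => ?_
      rw [hGpfd (Pi.single j 1) δ, hgV δ δ]
      simp [mul_comm]
    simp only [gradP]
    rw [hfun, fderiv_fun_sub hd1 hd2, ContinuousLinearMap.sub_apply, ht1, ht2]
    ring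
  -- final assembly
  have hpois : poisson (H α) (H β) (x t) (p t)
      = ∑ j, ((- gradX (L α) (x t) (fun γ => V γ (x t) (p t)) j) * V β (x t) (p t) j
          - V α (x t) (p t) j * (- gradX (L β) (x t) (fun γ => V γ (x t) (p t)) j)) := by
    simp only [poisson]
    exact Finset.sum_congr rfl fun j _ => by
      rw [claimQ α j, claimQ β j, claimP α j, claimP β j]
  rw [claimA β α, claimA α β, hpois, hsymm (Pi.single β 1) (Pi.single α 1)]
  have hcancel : ∀ S1 S2 S3 : ℝ, (S1 + S2) - (S3 + S2) = S1 - S3 := by intros; ring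
  rw [hcancel, ← Finset.sum_sub_distrib]
  exact Finset.sum_congr rfl fun j _ => by ring
end
end

section
/- Suppose the multi-time Lagrangian 1-form is Legendre transformable with smooth solving functions V_1, …, V_m : ℝ^N × ℝ^N → ℝ^N and Hamilton functions H_α(x,p) = ⟨p, V_α(x,p)⟩ − L_α(x, V_1(x,p), …, V_m(x,p)), and that all pairwise Poisson brackets vanish identically: {H_α, H_β} = 0 on ℝ^N × ℝ^N. Let x, p : ℝ^m → ℝ^N be smooth solutions of the multi-time Euler–Lagrange equations, i.e., x_{t_α} = V_α(x,p) and ∂p/∂t_α = ∂L_α/∂x(x, x_{t_1}, …, x_{t_m}) for all α. Then the value of the action is independent of the path: for any two smooth curves Γ_0, Γ_1 : [0,1] → ℝ^m with Γ_0(0) = Γ_1(0) and Γ_0(1) = Γ_1(1), one has S_{Γ_0}(x) = S_{Γ_1}(x). -/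
noncomputable section

/-! ### Auxiliary lemmas -/

section Aux

variable {m N : ℕ}

/-- expansion of a continuous linear map on `Fin k → ℝ` over the standard basis -/
lemma clm_expand_s5 {k : ℕ} {F : Type*} [NormedAddCommGroup F] [NormedSpace ℝ F]
    (D : (Fin k → ℝ) →L[ℝ] F) (u : Fin k → ℝ) :
    D u = ∑ j, u j • D (Pi.single j 1) := by
  conv_lhs => rw [← Finset.univ_sum_single u]
  rw [map_sum]
  congr 1; funext j
  rw [show (u j : ℝ) = u j • (1:ℝ) by simp, Pi.single_smul, map_smul]
  simp

/-- `Pi.single` as a continuous linear map -/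
def singleCLM {ι : Type*} [Fintype ι] [DecidableEq ι] (E : Type*) [NormedAddCommGroup E]
    [NormedSpace ℝ E] (γ : ι) : E →L[ℝ] (ι → E) :=
  ContinuousLinearMap.pi (fun δ => if δ = γ then ContinuousLinearMap.id ℝ E else 0)

lemma singleCLM_apply {ι : Type*} [Fintype ι] [DecidableEq ι] {E : Type*} [NormedAddCommGroup E]
    [NormedSpace ℝ E] (γ : ι) (w : E) : singleCLM E γ w = Pi.single γ w := by
  funext δ
  simp [singleCLM, Pi.single_apply]
  split <;> simp

/-- total derivative of a Lagrangian as a sum of its partial derivatives -/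
lemma fderiv_expand (L : (Fin N → ℝ) → (Fin m → (Fin N → ℝ)) → ℝ)
    (hL : ContDiff ℝ (⊤ : ℕ∞) (fun q : (Fin N → ℝ) × (Fin m → (Fin N → ℝ)) => L q.1 q.2))
    (a : Fin N → ℝ) (W : Fin m → (Fin N → ℝ)) (u : Fin N → ℝ) (K : Fin m → (Fin N → ℝ)) :
    fderiv ℝ (fun q : (Fin N → ℝ) × (Fin m → (Fin N → ℝ)) => L q.1 q.2) (a, W) (u, K)
      = (∑ j, gradX L a W j * u j) + ∑ γ, ∑ j, gradV L γ a W j * K γ j := by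
  classical
  set F := fun q : (Fin N → ℝ) × (Fin m → (Fin N → ℝ)) => L q.1 q.2 with hF
  have hdF : ∀ q, DifferentiableAt ℝ F q := fun q => (hL.differentiable (by simp)) q
  set D := fderiv ℝ F (a, W) with hD
  have hx : ∀ v : Fin N → ℝ, D (v, 0) = fderiv ℝ (fun a' => L a' W) a v := by
    intro v
    have h1 : HasFDerivAt (fun a' : Fin N → ℝ => (a', W))
        ((ContinuousLinearMap.id ℝ (Fin N → ℝ)).prod 0) a :=
      (hasFDerivAt_id a).prodMk (hasFDerivAt_const W a)
    have h2 : HasFDerivAt (fun a' => L a' W)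
        (D.comp ((ContinuousLinearMap.id ℝ (Fin N → ℝ)).prod 0)) a :=
      by have := ((hdF (a, W)).hasFDerivAt).comp a h1; simpa [Function.comp_def] using this
    rw [h2.fderiv]; rfl
  have hv : ∀ (γ : Fin m) (k : Fin N → ℝ),
      D (0, Pi.single γ k) = fderiv ℝ (fun w => L a (Function.update W γ w)) (W γ) k := by
    intro γ k
    have hupd : HasFDerivAt (fun w : Fin N → ℝ => Function.update W γ w)
        (singleCLM (Fin N → ℝ) γ) (W γ) := by
      have : (fun w : Fin N → ℝ => Function.update W γ w)
          = fun w => Function.update W γ 0 + singleCLM (Fin N → ℝ) γ w := by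
        funext w δ
        rw [singleCLM_apply]
        by_cases h : δ = γ
        · subst h; simp
        · simp [Function.update_of_ne h, Pi.single_apply, h]
      rw [this]
      exact (singleCLM (Fin N → ℝ) γ).hasFDerivAt.const_add _
    have h1 : HasFDerivAt (fun w : Fin N → ℝ => (a, Function.update W γ w))
        (((0 : (Fin N → ℝ) →L[ℝ] (Fin N → ℝ))).prod (singleCLM (Fin N → ℝ) γ)) (W γ) :=
      (hasFDerivAt_const a (W γ)).prodMk hupd
    have h2 : HasFDerivAt (fun w => L a (Function.update W γ w))
        (D.comp (((0 : (Fin N → ℝ) →L[ℝ] (Fin N → ℝ))).prod (singleCLM (Fin N → ℝ) γ)))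
        (W γ) := by
      have := ((hdF (a, Function.update W γ (W γ))).hasFDerivAt).comp (W γ) h1
      simpa [Function.update_eq_self, Function.comp_def] using this
    rw [h2.fderiv]
    simp [ContinuousLinearMap.comp_apply, singleCLM_apply]
  have hsplit : ((u, K) : (Fin N → ℝ) × (Fin m → (Fin N → ℝ)))
      = (u, 0) + ∑ γ, ((0 : Fin N → ℝ), Pi.single γ (K γ)) := by
    ext1
    · simp [Prod.fst_sum]
    · simp [Prod.snd_sum, Finset.univ_sum_single]
  rw [hsplit, map_add, map_sum, hx]
  congr 1
  · rw [clm_expand_s5 (fderiv ℝ (fun a' => L a' W) a) u]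
    congr 1; funext j; rw [smul_eq_mul, mul_comm]; rfl
  · congr 1; funext γ
    rw [hv γ (K γ), clm_expand_s5 (fderiv ℝ (fun w => L a (Function.update W γ w)) (W γ)) (K γ)]
    congr 1; funext j; rw [smul_eq_mul, mul_comm]; rfl

variable (L : Fin m → (Fin N → ℝ) → (Fin m → (Fin N → ℝ)) → ℝ)
    (hL : ∀ α, ContDiff ℝ (⊤ : ℕ∞)
      (fun q : (Fin N → ℝ) × (Fin m → (Fin N → ℝ)) => L α q.1 q.2))
    (V : Fin m → (Fin N → ℝ) → (Fin N → ℝ) → (Fin N → ℝ))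
    (hV : ∀ α, ContDiff ℝ (⊤ : ℕ∞)
      (fun q : (Fin N → ℝ) × (Fin N → ℝ) => V α q.1 q.2))
    (hLeg1 : ∀ (a b : Fin N → ℝ) (α β : Fin m), α ≠ β →
      gradV (L α) β a (fun γ => V γ a b) = 0)
    (hLeg2 : ∀ (a b : Fin N → ℝ) (α : Fin m),
      gradV (L α) α a (fun γ => V γ a b) = b)
    (H : Fin m → (Fin N → ℝ) → (Fin N → ℝ) → ℝ)
    (hH : ∀ (α : Fin m) (a b : Fin N → ℝ),
      H α a b = (∑ j, b j * V α a b j) - L α a (fun γ => V γ a b))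

include hLeg1 hLeg2 in
lemma legendre_sum (a b : Fin N → ℝ) (α : Fin m) (K : Fin m → Fin N → ℝ) :
    ∑ γ, ∑ k, gradV (L α) γ a (fun δ => V δ a b) k * K γ k = ∑ k, b k * K α k := by
  rw [Finset.sum_eq_single α]
  · rw [hLeg2 a b α]
  · intro γ _ hγ
    rw [hLeg1 a b α γ (Ne.symm hγ)]
    simp
  · simp

include hL hV hLeg1 hLeg2 hH in
lemma hamilton_P (α : Fin m) (a b : Fin N → ℝ) : gradP (H α) a b = V α a b := by
  classical
  funext j
  have hVb : ∀ γ, Differentiable ℝ (fun b' => V γ a b') := by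
    intro γ
    exact ((hV γ).comp (contDiff_const.prodMk contDiff_id)).differentiable (by simp)
  set DVb : Fin m → (Fin N → ℝ) →L[ℝ] (Fin N → ℝ) := fun γ => fderiv ℝ (fun b' => V γ a b') b
    with hDVb
  have h1 : HasFDerivAt (fun b' : Fin N → ℝ => ∑ k, b' k * V α a b' k)
      (∑ k, (b k • ((ContinuousLinearMap.proj k).comp (DVb α))
        + V α a b k • (ContinuousLinearMap.proj k : (Fin N → ℝ) →L[ℝ] ℝ))) b := by
    apply HasFDerivAt.fun_sum
    intro k _
    have hfk : HasFDerivAt (fun b' : Fin N → ℝ => b' k)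
        (ContinuousLinearMap.proj k : (Fin N → ℝ) →L[ℝ] ℝ) b :=
      hasFDerivAt_apply k b
    have hgk : HasFDerivAt (fun b' : Fin N → ℝ => V α a b' k)
        ((ContinuousLinearMap.proj k).comp (DVb α)) b := by
      have := (ContinuousLinearMap.proj (R := ℝ) (φ := fun _ : Fin N => ℝ) k).hasFDerivAt.comp b
        ((hVb α b).hasFDerivAt)
      simpa [Function.comp_def] using this
    exact hfk.fun_mul hgk
  set F := fun q : (Fin N → ℝ) × (Fin m → (Fin N → ℝ)) => L α q.1 q.2 with hF
  set D := fderiv ℝ F (a, fun γ => V γ a b) with hD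
  have hinner : HasFDerivAt (fun b' : Fin N → ℝ => ((a, fun γ => V γ a b') :
        (Fin N → ℝ) × (Fin m → (Fin N → ℝ))))
      ((0 : (Fin N → ℝ) →L[ℝ] (Fin N → ℝ)).prod (ContinuousLinearMap.pi DVb)) b :=
    (hasFDerivAt_const a b).prodMk (hasFDerivAt_pi.2 fun γ => (hVb γ b).hasFDerivAt)
  have h2 : HasFDerivAt (fun b' : Fin N → ℝ => L α a (fun γ => V γ a b'))
      (D.comp ((0 : (Fin N → ℝ) →L[ℝ] (Fin N → ℝ)).prod (ContinuousLinearMap.pi DVb))) b := by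
    have := ((hL α).differentiable (by simp) (a, fun γ => V γ a b)).hasFDerivAt.comp b hinner
    simpa [Function.comp_def] using this
  have hTot := h1.fun_sub h2
  have heq : (fun b' : Fin N → ℝ => H α a b')
      = fun b' => (∑ k, b' k * V α a b' k) - L α a (fun γ => V γ a b') :=
    funext fun b' => hH α a b'
  rw [gradP, heq, hTot.fderiv]
  have hDval : D ((0 : Fin N → ℝ), fun γ => DVb γ (Pi.single j 1))
      = ∑ k, b k * DVb α (Pi.single j 1) k := by
    rw [hD, hF, fderiv_expand (L α) (hL α)]
    rw [legendre_sum L V hLeg1 hLeg2 a b α]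
    simp
  simp only [ContinuousLinearMap.sub_apply, ContinuousLinearMap.comp_apply,
    ContinuousLinearMap.prod_apply, ContinuousLinearMap.sum_apply,
    ContinuousLinearMap.add_apply, ContinuousLinearMap.smul_apply,
    ContinuousLinearMap.proj_apply, ContinuousLinearMap.pi_apply,
    ContinuousLinearMap.zero_apply, smul_eq_mul]
  rw [show (ContinuousLinearMap.pi DVb) (Pi.single j 1) = fun γ => DVb γ (Pi.single j 1) from rfl,
    hDval]
  have : ∑ k, (b k * DVb α (Pi.single j 1) k + V α a b k * (Pi.single j 1 : Fin N → ℝ) k)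
      = (∑ k, b k * DVb α (Pi.single j 1) k) + V α a b j := by
    rw [Finset.sum_add_distrib]
    congr 1
    simp [Pi.single_apply, mul_ite, Finset.sum_ite_eq']
  rw [this]
  ring

include hL hV hLeg1 hLeg2 hH in
lemma hamilton_Q (α : Fin m) (a b : Fin N → ℝ) :
    gradQ (H α) a b = fun j => -(gradX (L α) a (fun γ => V γ a b) j) := by
  classical
  funext j
  have hVa : ∀ γ, Differentiable ℝ (fun a' => V γ a' b) := by
    intro γ
    exact ((hV γ).comp (contDiff_id.prodMk contDiff_const)).differentiable (by simp)
  set DVa : Fin m → (Fin N → ℝ) →L[ℝ] (Fin N → ℝ) := fun γ => fderiv ℝ (fun a' => V γ a' b) a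
    with hDVa
  have h1 : HasFDerivAt (fun a' : Fin N → ℝ => ∑ k, b k * V α a' b k)
      (∑ k, (b k • ((ContinuousLinearMap.proj k).comp (DVa α)))) a := by
    apply HasFDerivAt.fun_sum
    intro k _
    have hgk : HasFDerivAt (fun a' : Fin N → ℝ => V α a' b k)
        ((ContinuousLinearMap.proj k).comp (DVa α)) a := by
      have := (ContinuousLinearMap.proj (R := ℝ) (φ := fun _ : Fin N => ℝ) k).hasFDerivAt.comp a
        ((hVa α a).hasFDerivAt)
      simpa [Function.comp_def] using this
    exact hgk.const_mul (b k)
  set F := fun q : (Fin N → ℝ) × (Fin m → (Fin N → ℝ)) => L α q.1 q.2 with hF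
  set D := fderiv ℝ F (a, fun γ => V γ a b) with hD
  have hinner : HasFDerivAt (fun a' : Fin N → ℝ => ((a', fun γ => V γ a' b) :
        (Fin N → ℝ) × (Fin m → (Fin N → ℝ))))
      ((ContinuousLinearMap.id ℝ (Fin N → ℝ)).prod (ContinuousLinearMap.pi DVa)) a :=
    (hasFDerivAt_id a).prodMk (hasFDerivAt_pi.2 fun γ => (hVa γ a).hasFDerivAt)
  have h2 : HasFDerivAt (fun a' : Fin N → ℝ => L α a' (fun γ => V γ a' b))
      (D.comp ((ContinuousLinearMap.id ℝ (Fin N → ℝ)).prod (ContinuousLinearMap.pi DVa))) a := by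
    have := ((hL α).differentiable (by simp) (a, fun γ => V γ a b)).hasFDerivAt.comp a hinner
    simpa [Function.comp_def] using this
  have hTot := h1.fun_sub h2
  have heq : (fun a' : Fin N → ℝ => H α a' b)
      = fun a' => (∑ k, b k * V α a' b k) - L α a' (fun γ => V γ a' b) :=
    funext fun a' => hH α a' b
  rw [gradQ, heq, hTot.fderiv]
  have hDval : D (Pi.single j 1, fun γ => DVa γ (Pi.single j 1))
      = gradX (L α) a (fun γ => V γ a b) j + ∑ k, b k * DVa α (Pi.single j 1) k := by
    rw [hD, hF, fderiv_expand (L α) (hL α)]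
    rw [legendre_sum L V hLeg1 hLeg2 a b α]
    congr 1
    simp [Pi.single_apply, mul_ite, Finset.sum_ite_eq']
  simp only [ContinuousLinearMap.sub_apply, ContinuousLinearMap.comp_apply,
    ContinuousLinearMap.prod_apply, ContinuousLinearMap.sum_apply,
    ContinuousLinearMap.add_apply, ContinuousLinearMap.smul_apply,
    ContinuousLinearMap.proj_apply, ContinuousLinearMap.pi_apply,
    ContinuousLinearMap.coe_id', id_eq, smul_eq_mul]
  rw [show (ContinuousLinearMap.pi DVa) (Pi.single j 1) = fun γ => DVa γ (Pi.single j 1) from rfl,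
    hDval]
  ring

variable (hinv : ∀ (α β : Fin m) (a b : Fin N → ℝ), poisson (H α) (H β) a b = 0)

include hL hV hLeg1 hLeg2 hH hinv in
lemma gradX_symm (a b : Fin N → ℝ) (α β : Fin m) :
    ∑ j, gradX (L α) a (fun γ => V γ a b) j * V β a b j
      = ∑ j, gradX (L β) a (fun γ => V γ a b) j * V α a b j := by
  have h := hinv α β a b
  rw [poisson] at h
  rw [hamilton_P L hL V hV hLeg1 hLeg2 H hH α a b,
    hamilton_P L hL V hV hLeg1 hLeg2 H hH β a b,
    hamilton_Q L hL V hV hLeg1 hLeg2 H hH α a b,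
    hamilton_Q L hL V hV hLeg1 hLeg2 H hH β a b] at h
  simp only [neg_mul, mul_neg, sub_neg_eq_add] at h
  rw [Finset.sum_add_distrib] at h
  have h2 : ∑ j, V α a b j * gradX (L β) a (fun γ => V γ a b) j
      = ∑ j, gradX (L β) a (fun γ => V γ a b) j * V α a b j :=
    Finset.sum_congr rfl fun j _ => mul_comm _ _
  have h3 : ∑ j, -(gradX (L α) a (fun γ => V γ a b) j * V β a b j)
      = -∑ j, gradX (L α) a (fun γ => V γ a b) j * V β a b j := by
    rw [Finset.sum_neg_distrib]
  rw [h3, h2] at h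
  linarith

end Aux

section Jet

variable {m N : ℕ}

/-- evaluation at the basis vectors, as a continuous linear map on operators -/
def Jmap (m N : ℕ) : ((Fin m → ℝ) →L[ℝ] (Fin N → ℝ)) →L[ℝ] (Fin m → Fin N → ℝ) :=
  ContinuousLinearMap.pi (fun γ =>
    ContinuousLinearMap.apply ℝ (Fin N → ℝ) ((Pi.single γ 1 : Fin m → ℝ)))

variable (x : (Fin m → ℝ) → (Fin N → ℝ)) (hx : ContDiff ℝ (⊤ : ℕ∞) x)

lemma jet_eq : jet x = fun t => Jmap m N (fderiv ℝ x t) := rfl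

include hx in
lemma jet_smooth : ContDiff ℝ (⊤ : ℕ∞) (jet x) := by
  rw [jet_eq]
  exact (Jmap m N).contDiff.comp (hx.fderiv_right (m := (⊤:ℕ∞)) (by simp))

include hx in
lemma jet_hasFDerivAt (t : Fin m → ℝ) :
    HasFDerivAt (jet x) ((Jmap m N).comp (fderiv ℝ (fderiv ℝ x) t)) t := by
  have hdd : Differentiable ℝ (fderiv ℝ x) :=
    (hx.fderiv_right (m := (⊤:ℕ∞)) (by simp)).differentiable (by simp)
  have := (Jmap m N).hasFDerivAt.comp t (hdd t).hasFDerivAt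
  rw [jet_eq]
  simpa [Function.comp] using this

include hx in
lemma second_symm (t : Fin m → ℝ) (v w : Fin m → ℝ) :
    fderiv ℝ (fderiv ℝ x) t v w = fderiv ℝ (fderiv ℝ x) t w v := by
  have hdd : Differentiable ℝ (fderiv ℝ x) :=
    (hx.fderiv_right (m := (⊤:ℕ∞)) (by simp)).differentiable (by simp)
  exact second_derivative_symmetric
    (fun y => (hx.differentiable (by simp) y).hasFDerivAt) (hdd t).hasFDerivAt v w

variable (L : (Fin N → ℝ) → (Fin m → (Fin N → ℝ)) → ℝ)
    (hL : ContDiff ℝ (⊤ : ℕ∞)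
      (fun q : (Fin N → ℝ) × (Fin m → (Fin N → ℝ)) => L q.1 q.2))

include hx hL in
lemma ell_smooth : ContDiff ℝ (⊤ : ℕ∞) (fun t => L (x t) (jet x t)) :=
  hL.comp (hx.prodMk (jet_smooth x hx))

include hx hL in
lemma ell_fderiv (t : Fin m → ℝ) (β : Fin m) :
    fderiv ℝ (fun t => L (x t) (jet x t)) t (Pi.single β 1)
      = (∑ j, gradX L (x t) (jet x t) j * pdv x β t j)
        + ∑ γ, ∑ j, gradV L γ (x t) (jet x t) j
            * fderiv ℝ (fderiv ℝ x) t (Pi.single β 1) (Pi.single γ 1) j := by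
  have hφ : HasFDerivAt (fun t => (x t, jet x t))
      ((fderiv ℝ x t).prod ((Jmap m N).comp (fderiv ℝ (fderiv ℝ x) t))) t :=
    (hx.differentiable (by simp) t).hasFDerivAt.prodMk (jet_hasFDerivAt x hx t)
  have hc : HasFDerivAt (fun t => L (x t) (jet x t))
      ((fderiv ℝ (fun q : (Fin N → ℝ) × (Fin m → (Fin N → ℝ)) => L q.1 q.2)
        (x t, jet x t)).comp
        ((fderiv ℝ x t).prod ((Jmap m N).comp (fderiv ℝ (fderiv ℝ x) t)))) t := by
    have := ((hL.differentiable (by simp)) (x t, jet x t)).hasFDerivAt.comp t hφ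
    simpa [Function.comp_def] using this
  rw [hc.fderiv]
  rw [ContinuousLinearMap.comp_apply]
  rw [ContinuousLinearMap.prod_apply]
  rw [show ((fderiv ℝ x t) (Pi.single β 1)) = pdv x β t from rfl]
  rw [show (((Jmap m N).comp (fderiv ℝ (fderiv ℝ x) t)) (Pi.single β 1))
      = fun γ => fderiv ℝ (fderiv ℝ x) t (Pi.single β 1) (Pi.single γ 1) from rfl]
  exact fderiv_expand L hL (x t) (jet x t) _ _

end Jet

/-- If the multi-time Lagrangian 1-form is Legendre transformable and the
Hamilton functions are in involution, then on solutions of the multi-time Euler–Lagrange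
equations the action is independent of the path joining two given points of multi-time. -/
theorem action_path_independent {m N : ℕ}
    (L : Fin m → (Fin N → ℝ) → (Fin m → (Fin N → ℝ)) → ℝ)
    (hL : ∀ α, ContDiff ℝ (⊤ : ℕ∞)
      (fun q : (Fin N → ℝ) × (Fin m → (Fin N → ℝ)) => L α q.1 q.2))
    (V : Fin m → (Fin N → ℝ) → (Fin N → ℝ) → (Fin N → ℝ))
    (hV : ∀ α, ContDiff ℝ (⊤ : ℕ∞)
      (fun q : (Fin N → ℝ) × (Fin N → ℝ) => V α q.1 q.2))
    (hLeg1 : ∀ (a b : Fin N → ℝ) (α β : Fin m), α ≠ β →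
      gradV (L α) β a (fun γ => V γ a b) = 0)
    (hLeg2 : ∀ (a b : Fin N → ℝ) (α : Fin m),
      gradV (L α) α a (fun γ => V γ a b) = b)
    (H : Fin m → (Fin N → ℝ) → (Fin N → ℝ) → ℝ)
    (hH : ∀ (α : Fin m) (a b : Fin N → ℝ),
      H α a b = (∑ j, b j * V α a b j) - L α a (fun γ => V γ a b))
    (hinv : ∀ (α β : Fin m) (a b : Fin N → ℝ), poisson (H α) (H β) a b = 0)
    (x p : (Fin m → ℝ) → (Fin N → ℝ))
    (hx : ContDiff ℝ (⊤ : ℕ∞) x) (hp : ContDiff ℝ (⊤ : ℕ∞) p)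
    (hEL1 : ∀ (t : Fin m → ℝ) (α : Fin m), pdv x α t = V α (x t) (p t))
    (hEL2 : ∀ (t : Fin m → ℝ) (α : Fin m), pdv p α t = gradX (L α) (x t) (jet x t))
    (Γ₀ Γ₁ : ℝ → (Fin m → ℝ))
    (hΓ₀ : ContDiff ℝ (⊤ : ℕ∞) Γ₀) (hΓ₁ : ContDiff ℝ (⊤ : ℕ∞) Γ₁)
    (h0 : Γ₀ 0 = Γ₁ 0) (h1 : Γ₀ 1 = Γ₁ 1) :
    action L x Γ₀ = action L x Γ₁ := by
  classical
  -- the Lagrangian components along the solution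
  have hℓ : ∀ α : Fin m, ContDiff ℝ (⊤ : ℕ∞) (fun t => L α (x t) (jet x t)) :=
    fun α => ell_smooth x hx (L α) (hL α)
  -- key formula for the derivative of ℓ_α along the solution
  have key : ∀ (t : Fin m → ℝ) (α β : Fin m),
      fderiv ℝ (fun t' => L α (x t') (jet x t')) t (Pi.single β 1)
        = (∑ j, gradX (L α) (x t) (fun γ => V γ (x t) (p t)) j * V β (x t) (p t) j)
          + ∑ j, p t j * fderiv ℝ (fderiv ℝ x) t (Pi.single β 1) (Pi.single α 1) j := by
    intro t α β
    have hjet : jet x t = fun γ => V γ (x t) (p t) := funext (hEL1 t)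
    rw [ell_fderiv x hx (L α) (hL α) t β, hjet,
      show pdv x β t = V β (x t) (p t) from hEL1 t β,
      legendre_sum L V hLeg1 hLeg2 (x t) (p t) α]
  -- closedness of the 1-form
  have closed : ∀ (t : Fin m → ℝ) (α β : Fin m),
      fderiv ℝ (fun t' => L α (x t') (jet x t')) t (Pi.single β 1)
        = fderiv ℝ (fun t' => L β (x t') (jet x t')) t (Pi.single α 1) := by
    intro t α β
    rw [key t α β, key t β α,
      gradX_symm L hL V hV hLeg1 hLeg2 H hH hinv (x t) (p t) α β]
    congr 1
    refine Finset.sum_congr rfl fun j _ => ?_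
    rw [second_symm x hx t (Pi.single β 1) (Pi.single α 1)]
  -- symmetric bilinear version of closedness
  have sym2 : ∀ (t : Fin m → ℝ) (v w : Fin m → ℝ),
      ∑ α, fderiv ℝ (fun t' => L α (x t') (jet x t')) t v * w α
        = ∑ α, fderiv ℝ (fun t' => L α (x t') (jet x t')) t w * v α := by
    intro t v w
    have e1 : ∀ (α : Fin m) (u : Fin m → ℝ),
        fderiv ℝ (fun t' => L α (x t') (jet x t')) t u
          = ∑ β, u β * fderiv ℝ (fun t' => L α (x t') (jet x t')) t (Pi.single β 1) := by
      intro α u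
      rw [clm_expand_s5 (fderiv ℝ (fun t' => L α (x t') (jet x t')) t) u]
      simp [smul_eq_mul]
    calc ∑ α, fderiv ℝ (fun t' => L α (x t') (jet x t')) t v * w α
        = ∑ α, ∑ β, v β * fderiv ℝ (fun t' => L β (x t') (jet x t')) t (Pi.single α 1) * w α := by
          refine Finset.sum_congr rfl fun α _ => ?_
          rw [e1 α v, Finset.sum_mul]
          exact Finset.sum_congr rfl fun β _ => by rw [closed t α β]
      _ = ∑ β, ∑ α, v β * fderiv ℝ (fun t' => L β (x t') (jet x t')) t (Pi.single α 1) * w α :=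
          Finset.sum_comm
      _ = ∑ β, fderiv ℝ (fun t' => L β (x t') (jet x t')) t w * v β := by
          refine Finset.sum_congr rfl fun β _ => ?_
          rw [e1 β w, Finset.sum_mul]
          exact Finset.sum_congr rfl fun α _ => by ring
  -- curve data
  set Δ : ℝ → (Fin m → ℝ) := fun s => Γ₁ s - Γ₀ s with hΔdef
  set dΔ : ℝ → (Fin m → ℝ) := fun s => deriv Γ₁ s - deriv Γ₀ s with hdΔdef
  have hΓ₀d : ∀ s, HasDerivAt Γ₀ (deriv Γ₀ s) s :=
    fun s => (hΓ₀.differentiable (by simp) s).hasDerivAt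
  have hΓ₁d : ∀ s, HasDerivAt Γ₁ (deriv Γ₁ s) s :=
    fun s => (hΓ₁.differentiable (by simp) s).hasDerivAt
  have hΔd : ∀ s, HasDerivAt Δ (dΔ s) s := fun s => (hΓ₁d s).sub (hΓ₀d s)
  set γc : ℝ → ℝ → (Fin m → ℝ) := fun u s => Γ₀ s + u • Δ s with hγcdef
  set g : ℝ → ℝ → ℝ :=
    fun u s => ∑ α, L α (x (γc u s)) (jet x (γc u s)) * (deriv Γ₀ s + u • dΔ s) α with hgdef
  set dg : ℝ → ℝ → ℝ := fun u s => ∑ α,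
    (fderiv ℝ (fun t' => L α (x t') (jet x t')) (γc u s) (Δ s) * (deriv Γ₀ s + u • dΔ s) α
      + L α (x (γc u s)) (jet x (γc u s)) * dΔ s α) with hdgdef
  set hfun : ℝ → ℝ → ℝ :=
    fun u s => ∑ β, L β (x (γc u s)) (jet x (γc u s)) * Δ s β with hhdef
  set dh : ℝ → ℝ → ℝ := fun u s => ∑ β,
    (fderiv ℝ (fun t' => L β (x t') (jet x t')) (γc u s) (deriv Γ₀ s + u • dΔ s) * Δ s β
      + L β (x (γc u s)) (jet x (γc u s)) * dΔ s β) with hdhdef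
  have hdgdh : ∀ u s, dg u s = dh u s := by
    intro u s
    rw [hdgdef, hdhdef]
    simp only [Finset.sum_add_distrib]
    congr 1
    exact sym2 (γc u s) (Δ s) (deriv Γ₀ s + u • dΔ s)
  -- continuity facts
  have hγccont : Continuous (fun q : ℝ × ℝ => γc q.1 q.2) := by
    apply Continuous.add
    · exact hΓ₀.continuous.comp continuous_snd
    · exact continuous_fst.smul ((hΓ₁.continuous.comp continuous_snd).sub
        (hΓ₀.continuous.comp continuous_snd))
  have hd₀cont : Continuous (deriv Γ₀) := hΓ₀.continuous_deriv (by simp)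
  have hd₁cont : Continuous (deriv Γ₁) := hΓ₁.continuous_deriv (by simp)
  have hΔcont : Continuous Δ := hΓ₁.continuous.sub hΓ₀.continuous
  have hdΔcont : Continuous dΔ := hd₁cont.sub hd₀cont
  have hdgcont : Continuous (fun q : ℝ × ℝ => dg q.1 q.2) := by
    rw [hdgdef]
    apply continuous_finset_sum
    intro α _
    apply Continuous.add
    · apply Continuous.mul
      · exact Continuous.clm_apply
          (((hℓ α).continuous_fderiv (by simp)).comp hγccont)
          (hΔcont.comp continuous_snd)
      · exact (continuous_apply α).comp ((hd₀cont.comp continuous_snd).add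
          (continuous_fst.smul (hdΔcont.comp continuous_snd)))
    · exact Continuous.mul ((hℓ α).continuous.comp hγccont)
        ((continuous_apply α).comp (hdΔcont.comp continuous_snd))
  -- derivative in u of g
  have hgu : ∀ s u, HasDerivAt (fun u' => g u' s) (dg u s) u := by
    intro s u
    rw [hgdef, hdgdef]
    apply HasDerivAt.fun_sum
    intro α _
    have hcu : HasDerivAt (fun u' : ℝ => γc u' s) (Δ s) u := by
      have : HasDerivAt (fun u' : ℝ => u' • Δ s) ((1:ℝ) • Δ s) u :=
        (hasDerivAt_id u).smul_const (Δ s)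
      simpa [hγcdef] using this.const_add (Γ₀ s)
    have h1 : HasDerivAt (fun u' => L α (x (γc u' s)) (jet x (γc u' s)))
        (fderiv ℝ (fun t' => L α (x t') (jet x t')) (γc u s) (Δ s)) u := by
      have := (((hℓ α).differentiable (by simp)) (γc u s)).hasFDerivAt.comp_hasDerivAt u hcu
      simpa [Function.comp_def] using this
    have h2 : HasDerivAt (fun u' : ℝ => (deriv Γ₀ s + u' • dΔ s) α) (dΔ s α) u := by
      have : HasDerivAt (fun u' : ℝ => deriv Γ₀ s α + u' * dΔ s α) (dΔ s α) u := by
        simpa using ((hasDerivAt_id u).mul_const (dΔ s α)).const_add (deriv Γ₀ s α)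
      exact this
    simpa using h1.fun_mul h2
  -- derivative in s of hfun
  have hhs : ∀ u s, HasDerivAt (fun s' => hfun u s') (dh u s) s := by
    intro u s
    rw [hhdef, hdhdef]
    apply HasDerivAt.fun_sum
    intro β _
    have hcs : HasDerivAt (fun s' : ℝ => γc u s') (deriv Γ₀ s + u • dΔ s) s := by
      exact (hΓ₀d s).add ((hΔd s).const_smul u)
    have h1 : HasDerivAt (fun s' => L β (x (γc u s')) (jet x (γc u s')))
        (fderiv ℝ (fun t' => L β (x t') (jet x t')) (γc u s) (deriv Γ₀ s + u • dΔ s)) s := by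
      have := (((hℓ β).differentiable (by simp)) (γc u s)).hasFDerivAt.comp_hasDerivAt s hcs
      simpa [Function.comp_def] using this
    have h2 : HasDerivAt (fun s' : ℝ => Δ s' β) (dΔ s β) s := by
      have := (ContinuousLinearMap.proj (R := ℝ) (φ := fun _ : Fin m => ℝ)
        β).hasFDerivAt.comp_hasDerivAt s (hΔd s)
      simpa [Function.comp_def] using this
    exact h1.fun_mul h2
  -- Step 1 : FTC in u
  have step1 : ∀ s, g 1 s - g 0 s = ∫ u in (0:ℝ)..1, dg u s := by
    intro s
    have hc : Continuous (fun u : ℝ => dg u s) := by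
      have := hdgcont.comp
        ((continuous_id.prodMk continuous_const) : Continuous fun u : ℝ => (u, s))
      simpa [Function.comp_def] using this
    rw [intervalIntegral.integral_eq_sub_of_hasDerivAt (fun u _ => hgu s u)
      (hc.intervalIntegrable 0 1)]
  -- Step 2 : FTC in s
  have step2 : ∀ u, (∫ s in (0:ℝ)..1, dh u s) = 0 := by
    intro u
    have hΔ0 : Δ 0 = 0 := by rw [hΔdef]; simp [h0]
    have hΔ1 : Δ 1 = 0 := by rw [hΔdef]; simp [h1]
    have hdhcont : Continuous (fun s => dh u s) := by
      have hthis := hdgcont.comp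
        ((continuous_const.prodMk continuous_id) : Continuous fun s : ℝ => (u, s))
      have heq : (fun s => dg u s) = fun s => dh u s := funext fun s => hdgdh u s
      rw [← heq]
      simpa [Function.comp_def] using hthis
    rw [intervalIntegral.integral_eq_sub_of_hasDerivAt (fun s _ => hhs u s)
      (hdhcont.intervalIntegrable 0 1)]
    rw [hhdef]
    simp [hΔ0, hΔ1]
  -- Fubini
  have fubini : (∫ s in (0:ℝ)..1, ∫ u in (0:ℝ)..1, dg u s)
      = ∫ u in (0:ℝ)..1, ∫ s in (0:ℝ)..1, dg u s := by
    have hint : MeasureTheory.Integrable (Function.uncurry (fun s u => dg u s))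
        ((MeasureTheory.volume.restrict (Set.Ioc (0:ℝ) 1)).prod
          (MeasureTheory.volume.restrict (Set.Ioc (0:ℝ) 1))) := by
      rw [MeasureTheory.Measure.prod_restrict]
      apply MeasureTheory.IntegrableOn.mono_set
        (t := Set.Icc (0:ℝ) 1 ×ˢ Set.Icc (0:ℝ) 1)
      · exact (hdgcont.comp continuous_swap).continuousOn.integrableOn_compact
          (isCompact_Icc.prod isCompact_Icc)
      · exact Set.prod_mono Set.Ioc_subset_Icc_self Set.Ioc_subset_Icc_self
    rw [intervalIntegral.integral_of_le (zero_le_one), intervalIntegral.integral_of_le (zero_le_one)]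
    simp_rw [intervalIntegral.integral_of_le (zero_le_one)]
    exact MeasureTheory.integral_integral_swap hint
  -- assemble
  have hgcont : ∀ u : ℝ, Continuous (fun s => g u s) := by
    intro u
    rw [hgdef]
    apply continuous_finset_sum
    intro α _
    apply Continuous.mul
    · exact ((hℓ α).continuous).comp (hγccont.comp (continuous_const.prodMk continuous_id))
    · exact (continuous_apply α).comp (hd₀cont.add (continuous_const.fun_smul hdΔcont))
  have haction0 : action L x Γ₀ = ∫ s in (0:ℝ)..1, g 0 s := by
    rw [action, hgdef]
    congr 1
    funext s
    congr 1
    funext α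
    rw [hγcdef]
    simp
  have haction1 : action L x Γ₁ = ∫ s in (0:ℝ)..1, g 1 s := by
    rw [action, hgdef]
    congr 1
    funext s
    rw [hγcdef, hΔdef, hdΔdef]
    simp
  rw [haction0, haction1]
  have hdiff : (∫ s in (0:ℝ)..1, g 1 s) - (∫ s in (0:ℝ)..1, g 0 s)
      = ∫ s in (0:ℝ)..1, (g 1 s - g 0 s) := by
    rw [intervalIntegral.integral_sub ((hgcont 1).intervalIntegrable 0 1)
      ((hgcont 0).intervalIntegrable 0 1)]
  have : (∫ s in (0:ℝ)..1, (g 1 s - g 0 s)) = 0 := by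
    calc (∫ s in (0:ℝ)..1, (g 1 s - g 0 s))
        = ∫ s in (0:ℝ)..1, ∫ u in (0:ℝ)..1, dg u s := by
          congr 1; funext s; exact step1 s
      _ = ∫ u in (0:ℝ)..1, ∫ s in (0:ℝ)..1, dg u s := fubini
      _ = ∫ u in (0:ℝ)..1, (0:ℝ) := by
          congr 1; funext u
          calc (∫ s in (0:ℝ)..1, dg u s) = ∫ s in (0:ℝ)..1, dh u s := by
                congr 1; funext s; exact hdgdh u s
            _ = 0 := step2 u
      _ = 0 := by simp
  linarith [hdiff, this]
end
end

section
/- Let H_1, …, H_m : ℝ^N × ℝ^N → ℝ be smooth, and suppose there is a smooth map P : ℝ^N × ℝ^N → ℝ^N inverting the first Legendre transformation: ∂H_1/∂p(x, P(x,v)) = v for all (x,v), and P(x, ∂H_1/∂p(x,p)) = p for all (x,p). Define L_1(x, v_1) = ⟨P(x,v_1), v_1⟩ − H_1(x, P(x,v_1)) and, for α = 2, …, m, L_α(x, v_1, v_α) = ⟨P(x,v_1), v_α⟩ − H_α(x, P(x,v_1)) (so L_α depends only on x, v_1, v_α). Then for any smooth functions x, p : ℝ^m → ℝ^N satisfying simultaneously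 all Hamiltonian equations ∂x/∂t_α = ∂H_α/∂p(x,p), ∂p/∂t_α = −∂H_α/∂x(x,p) (α = 1, …, m), the function x satisfies the multi-time Euler–Lagrange equations of this Lagrangian 1-form: ∂L_α/∂v_β(x, x_{t_1}, …, x_{t_m}) = 0 for all α ≠ β, the derivatives ∂L_α/∂v_α(x, x_{t_1}, …, x_{t_m}) all coincide and equal p, and ∂p/∂t_α = ∂L_α/∂x(x, x_{t_1}, …, x_{t_m}) for all α. -/
noncomputable section

/-! ### Auxiliary lemmas -/

def prj {N : ℕ} (j : Fin N) : (Fin N → ℝ) →L[ℝ] ℝ := ContinuousLinearMap.proj j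

def dotCLM {N : ℕ} (c : Fin N → ℝ) : (Fin N → ℝ) →L[ℝ] ℝ := ∑ j, c j • prj j

lemma dotCLM_apply {N : ℕ} (c v : Fin N → ℝ) : dotCLM c v = ∑ j, v j * c j := by
  simp [dotCLM, prj, mul_comm]

lemma dotCLM_single {N : ℕ} (c : Fin N → ℝ) (j : Fin N) :
    dotCLM c (Pi.single j 1) = c j := by
  simp [dotCLM_apply, Pi.single_apply]

lemma hasFDerivAt_dot {N : ℕ} (c v : Fin N → ℝ) :
    HasFDerivAt (fun v : Fin N → ℝ => ∑ j, v j * c j) (dotCLM c) v := by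
  have h : (fun v : Fin N → ℝ => ∑ j, v j * c j) = dotCLM c :=
    funext fun v => (dotCLM_apply c v).symm
  rw [h]
  exact (dotCLM c).hasFDerivAt

lemma clm_sum_single {N : ℕ} (L : (Fin N → ℝ) →L[ℝ] ℝ) (u : Fin N → ℝ) :
    L u = ∑ j, u j * L (Pi.single j 1) := by
  conv_lhs => rw [pi_eq_sum_univ u]
  rw [map_sum]
  refine Finset.sum_congr rfl fun j _ => ?_
  have h : (fun j' => if j = j' then (1:ℝ) else 0) = Pi.single j 1 := by
    ext j'; simp [Pi.single_apply, eq_comm]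
  rw [map_smul, h, smul_eq_mul]

/-- Given commuting Hamiltonian flows `H_α` whose first Legendre
transformation is invertible via `P`, the Lagrangian 1-form with components
`L_1(x,v_1) = ⟨P(x,v_1),v_1⟩ − H_1(x,P(x,v_1))` and
`L_α(x,v_1,v_α) = ⟨P(x,v_1),v_α⟩ − H_α(x,P(x,v_1))` satisfies the multi-time
Euler–Lagrange equations along any common solution `(x,p)` of the Hamiltonian flows. -/
theorem lagrangian_from_hamiltonians {m N : ℕ} (hm : 0 < m)
    (H : Fin m → (Fin N → ℝ) → (Fin N → ℝ) → ℝ)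
    (hH : ∀ α, ContDiff ℝ (⊤ : ℕ∞)
      (fun q : (Fin N → ℝ) × (Fin N → ℝ) => H α q.1 q.2))
    (P : (Fin N → ℝ) → (Fin N → ℝ) → (Fin N → ℝ))
    (hP : ContDiff ℝ (⊤ : ℕ∞) (fun q : (Fin N → ℝ) × (Fin N → ℝ) => P q.1 q.2))
    (hP1 : ∀ a v : Fin N → ℝ, gradP (H ⟨0, hm⟩) a (P a v) = v)
    (hP2 : ∀ a b : Fin N → ℝ, P a (gradP (H ⟨0, hm⟩) a b) = b)
    (L : Fin m → (Fin N → ℝ) → (Fin m → (Fin N → ℝ)) → ℝ)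
    (hLdef : ∀ (α : Fin m) (a : Fin N → ℝ) (W : Fin m → (Fin N → ℝ)),
      L α a W = (∑ j, P a (W ⟨0, hm⟩) j * W α j) - H α a (P a (W ⟨0, hm⟩)))
    (x p : (Fin m → ℝ) → (Fin N → ℝ))
    (hx : ContDiff ℝ (⊤ : ℕ∞) x) (hp : ContDiff ℝ (⊤ : ℕ∞) p)
    (hHam1 : ∀ (t : Fin m → ℝ) (α : Fin m), pdv x α t = gradP (H α) (x t) (p t))
    (hHam2 : ∀ (t : Fin m → ℝ) (α : Fin m), pdv p α t = -gradQ (H α) (x t) (p t)) :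
    (∀ (t : Fin m → ℝ) (α β : Fin m), α ≠ β → gradV (L α) β (x t) (jet x t) = 0) ∧
    (∀ (t : Fin m → ℝ) (α : Fin m), gradV (L α) α (x t) (jet x t) = p t) ∧
    (∀ (t : Fin m → ℝ) (α : Fin m), pdv p α t = gradX (L α) (x t) (jet x t)) := by
  classical
  set e0 : Fin m := ⟨0, hm⟩ with he0
  -- partial differentiability
  have hPv : ∀ a : Fin N → ℝ, Differentiable ℝ (fun v => P a v) := fun a =>
    (hP.comp (contDiff_const.prodMk contDiff_id)).differentiable (by simp)
  have hPx : ∀ c : Fin N → ℝ, Differentiable ℝ (fun a' => P a' c) := fun c =>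
    (hP.comp (contDiff_id.prodMk contDiff_const)).differentiable (by simp)
  have hHp : ∀ (α : Fin m) (a : Fin N → ℝ), Differentiable ℝ (fun v => H α a v) :=
    fun α a => ((hH α).comp (contDiff_const.prodMk contDiff_id)).differentiable (by simp)
  have hHK : ∀ α : Fin m,
      Differentiable ℝ (fun q : (Fin N → ℝ) × (Fin N → ℝ) => H α q.1 q.2) :=
    fun α => (hH α).differentiable (by simp)
  -- basic facts along the solution
  have hW : ∀ (t : Fin m → ℝ) (γ : Fin m), jet x t γ = gradP (H γ) (x t) (p t) :=
    fun t γ => hHam1 t γ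
  have hb : ∀ t : Fin m → ℝ, P (x t) (jet x t e0) = p t := by
    intro t; rw [hW t e0, hP2]
  have hc0 : ∀ t : Fin m → ℝ, gradP (H e0) (x t) (p t) = jet x t e0 := by
    intro t
    have := hP1 (x t) (jet x t e0)
    rwa [hb t] at this
  refine ⟨?_, ?_, ?_⟩
  · -- EL equations for α ≠ β
    intro t α β hne
    by_cases hβ0 : β = e0
    · subst hβ0
      have hαe : α ≠ e0 := hne
      -- rewrite the function
      have hfun : (fun w => L α (x t) (Function.update (jet x t) e0 w)) =
          (fun u => (∑ j, u j * jet x t α j) - H α (x t) u) ∘ (fun w => P (x t) w) := by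
        funext w
        rw [hLdef]
        simp [Function.update_self, Function.update_of_ne hαe, mul_comm]
      have hG : HasFDerivAt (fun u => (∑ j, u j * jet x t α j) - H α (x t) u)
          (dotCLM (jet x t α) - fderiv ℝ (fun v => H α (x t) v) (p t))
          (P (x t) (jet x t e0)) := by
        rw [hb t]
        exact (hasFDerivAt_dot _ _).sub ((hHp α (x t) (p t)).hasFDerivAt)
      have hzero : dotCLM (jet x t α) - fderiv ℝ (fun v => H α (x t) v) (p t) = 0 := by
        ext v
        simp only [ContinuousLinearMap.sub_apply, ContinuousLinearMap.zero_apply,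
          dotCLM_apply]
        rw [clm_sum_single (fderiv ℝ (fun v => H α (x t) v) (p t)) v, hW t α]
        simp [gradP]
      have hf : HasFDerivAt (fun w => L α (x t) (Function.update (jet x t) e0 w))
          ((0 : (Fin N → ℝ) →L[ℝ] ℝ)) (jet x t e0) := by
        rw [hfun]
        have hget := hG.comp (jet x t e0) ((hPv (x t)) (jet x t e0)).hasFDerivAt
        rw [hzero] at hget
        simpa using hget
      funext j
      show fderiv ℝ (fun w => L α (x t) (Function.update (jet x t) e0 w))
        (jet x t e0) (Pi.single j 1) = 0
      rw [hf.fderiv]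
      simp
    · -- β ≠ e0: the function is constant
      have hfun : (fun w => L α (x t) (Function.update (jet x t) β w)) =
          fun _ => L α (x t) (jet x t) := by
        funext w
        rw [hLdef, hLdef, Function.update_of_ne (Ne.symm hβ0),
          Function.update_of_ne hne]
      funext j
      show fderiv ℝ (fun w => L α (x t) (Function.update (jet x t) β w))
        (jet x t β) (Pi.single j 1) = 0
      rw [hfun, fderiv_fun_const]
      simp
  · -- gradV (L α) α = p
    intro t α
    by_cases hα0 : α = e0
    · subst hα0
      have hfun : (fun w => L e0 (x t) (Function.update (jet x t) e0 w)) =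
          fun w => (∑ j, P (x t) w j * w j) - H e0 (x t) (P (x t) w) := by
        funext w
        rw [hLdef]
        simp [Function.update_self]
      have hPafd : HasFDerivAt (fun w => P (x t) w)
          (fderiv ℝ (fun w => P (x t) w) (jet x t e0)) (jet x t e0) :=
        ((hPv (x t)) (jet x t e0)).hasFDerivAt
      have hterm : ∀ j : Fin N, HasFDerivAt (fun w => P (x t) w j * w j)
          (P (x t) (jet x t e0) j • prj j +
            (jet x t e0) j • ((prj j).comp (fderiv ℝ (fun w => P (x t) w) (jet x t e0))))
          (jet x t e0) := by
        intro j
        have h1 : HasFDerivAt (fun w => P (x t) w j)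
            ((prj j).comp (fderiv ℝ (fun w => P (x t) w) (jet x t e0))) (jet x t e0) :=
          ((prj j).hasFDerivAt).comp _ hPafd
        exact h1.mul ((prj j).hasFDerivAt)
      have hfd : HasFDerivAt
          (fun w => (∑ j, P (x t) w j * w j) - H e0 (x t) (P (x t) w))
          ((∑ j, (P (x t) (jet x t e0) j • prj j +
              (jet x t e0) j • ((prj j).comp (fderiv ℝ (fun w => P (x t) w) (jet x t e0))))) -
            (fderiv ℝ (fun v => H e0 (x t) v) (P (x t) (jet x t e0))).comp
              (fderiv ℝ (fun w => P (x t) w) (jet x t e0)))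
          (jet x t e0) := by
        refine (HasFDerivAt.fun_sum fun j _ => hterm j).fun_sub ?_
        exact (((hHp e0 (x t)) (P (x t) (jet x t e0))).hasFDerivAt).comp _ hPafd
      have hDH : ∀ u, fderiv ℝ (fun v => H e0 (x t) v) (P (x t) (jet x t e0)) u
          = ∑ i, u i * jet x t e0 i := by
        intro u
        rw [clm_sum_single]
        refine Finset.sum_congr rfl fun i _ => ?_
        congr 1
        have h : fderiv ℝ (fun v => H e0 (x t) v) (P (x t) (jet x t e0)) (Pi.single i 1)
            = gradP (H e0) (x t) (P (x t) (jet x t e0)) i := rfl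
        rw [h, hP1]
      funext j
      show fderiv ℝ (fun w => L e0 (x t) (Function.update (jet x t) e0 w))
        (jet x t e0) (Pi.single j 1) = p t j
      rw [hfun, hfd.fderiv]
      simp only [ContinuousLinearMap.sub_apply, ContinuousLinearMap.sum_apply,
        ContinuousLinearMap.add_apply, ContinuousLinearMap.smul_apply,
        ContinuousLinearMap.comp_apply, smul_eq_mul, hDH]
      have hpr : ∀ (i : Fin N) (v : Fin N → ℝ), prj i v = v i := fun i v => rfl
      simp only [hpr]
      rw [Finset.sum_add_distrib]
      have hcomm : ∑ i, jet x t e0 i *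
            (fderiv ℝ (fun w => P (x t) w) (jet x t e0)) (Pi.single j 1) i
          = ∑ i, (fderiv ℝ (fun w => P (x t) w) (jet x t e0)) (Pi.single j 1) i *
            jet x t e0 i :=
        Finset.sum_congr rfl fun i _ => mul_comm _ _
      rw [hcomm, add_sub_cancel_right]
      have hsingle : ∑ i, P (x t) (jet x t e0) i * (Pi.single j 1 : Fin N → ℝ) i
          = P (x t) (jet x t e0) j := by
        simp [Pi.single_apply]
      rw [hsingle, hb t]
    · have he0α : e0 ≠ α := fun h => hα0 h.symm
      have hfun : (fun w => L α (x t) (Function.update (jet x t) α w)) =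
          fun w => (∑ j, w j * p t j) - H α (x t) (p t) := by
        funext w
        rw [hLdef]
        simp only [Function.update_self, Function.update_of_ne he0α, hb t]
        congr 1
        exact Finset.sum_congr rfl fun i _ => mul_comm _ _
      have hfd : HasFDerivAt (fun w => (∑ j, w j * p t j) - H α (x t) (p t))
          (dotCLM (p t)) (jet x t α) := (hasFDerivAt_dot _ _).sub_const _
      funext j
      show fderiv ℝ (fun w => L α (x t) (Function.update (jet x t) α w))
        (jet x t α) (Pi.single j 1) = p t j
      rw [hfun, hfd.fderiv, dotCLM_single]
  · -- pdv p α = gradX (L α)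
    intro t α
    have hfun : (fun a' => L α a' (jet x t)) =
        fun a' => (∑ i, P a' (jet x t e0) i * jet x t α i) -
          H α a' (P a' (jet x t e0)) :=
      funext fun a' => hLdef α a' (jet x t)
    have hQfd : HasFDerivAt (fun a' => P a' (jet x t e0))
        (fderiv ℝ (fun a' => P a' (jet x t e0)) (x t)) (x t) :=
      ((hPx (jet x t e0)) (x t)).hasFDerivAt
    set DQ := fderiv ℝ (fun a' => P a' (jet x t e0)) (x t) with hDQdef
    have h1 : HasFDerivAt (fun a' => ∑ i, P a' (jet x t e0) i * jet x t α i)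
        (∑ i, jet x t α i • ((prj i).comp DQ)) (x t) := by
      refine HasFDerivAt.fun_sum fun i _ => ?_
      exact ((((prj i).hasFDerivAt).comp _ hQfd).mul_const _)
    set DK := fderiv ℝ (fun q : (Fin N → ℝ) × (Fin N → ℝ) => H α q.1 q.2)
        (x t, p t) with hDKdef
    have hKd : HasFDerivAt (fun q : (Fin N → ℝ) × (Fin N → ℝ) => H α q.1 q.2) DK
        (x t, p t) := ((hHK α) _).hasFDerivAt
    have h2 : HasFDerivAt (fun a' => H α a' (P a' (jet x t e0)))
        (DK.comp ((ContinuousLinearMap.id ℝ (Fin N → ℝ)).prod DQ)) (x t) := by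
      have hpt : HasFDerivAt (fun a' => (a', P a' (jet x t e0)))
          ((ContinuousLinearMap.id ℝ (Fin N → ℝ)).prod DQ) (x t) :=
        (hasFDerivAt_id (x t)).prodMk hQfd
      have hKd' : HasFDerivAt (fun q : (Fin N → ℝ) × (Fin N → ℝ) => H α q.1 q.2) DK
          ((x t), P (x t) (jet x t e0)) := by rw [hb t]; exact hKd
      exact hKd'.comp (x t) hpt
    have hfd := h1.fun_sub h2
    have hDK1 : ∀ u, DK (u, 0) = fderiv ℝ (fun a' => H α a' (p t)) (x t) u := by
      intro u
      have hc : HasFDerivAt (fun a' => H α a' (p t))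
          (DK.comp ((ContinuousLinearMap.id ℝ (Fin N → ℝ)).prod 0)) (x t) :=
        by have := hKd.comp (x t) ((hasFDerivAt_id (𝕜 := ℝ) (x t)).prodMk (hasFDerivAt_const (p t) (x t))); exact this
      rw [hc.fderiv]
      rfl
    have hDK2 : ∀ v, DK (0, v) = fderiv ℝ (fun b' => H α (x t) b') (p t) v := by
      intro v
      have hc : HasFDerivAt (fun b' => H α (x t) b')
          (DK.comp ((0 : (Fin N → ℝ) →L[ℝ] (Fin N → ℝ)).prod
            (ContinuousLinearMap.id ℝ (Fin N → ℝ)))) (p t) :=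
        hKd.comp (p t) ((hasFDerivAt_const (x t) (p t)).prodMk (hasFDerivAt_id (p t)))
      rw [hc.fderiv]
      rfl
    have hsplit : ∀ u v : Fin N → ℝ, DK (u, v) = DK (u, 0) + DK (0, v) := by
      intro u v
      rw [← map_add]
      congr 1
      simp
    funext j
    show pdv p α t j = fderiv ℝ (fun a' => L α a' (jet x t)) (x t) (Pi.single j 1)
    rw [hHam2 t α, hfun, hfd.fderiv]
    simp only [ContinuousLinearMap.sub_apply, ContinuousLinearMap.sum_apply,
      ContinuousLinearMap.smul_apply, ContinuousLinearMap.comp_apply,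
      ContinuousLinearMap.prod_apply, ContinuousLinearMap.coe_id', id_eq, smul_eq_mul]
    have hpr : ∀ (i : Fin N) (v : Fin N → ℝ), prj i v = v i := fun i v => rfl
    simp only [hpr]
    rw [hsplit, hDK1, hDK2,
      clm_sum_single (fderiv ℝ (fun b' => H α (x t) b') (p t)) (DQ (Pi.single j 1))]
    have hg1 : fderiv ℝ (fun a' => H α a' (p t)) (x t) (Pi.single j 1)
        = gradQ (H α) (x t) (p t) j := rfl
    have hg2 : ∀ i, fderiv ℝ (fun b' => H α (x t) b') (p t) (Pi.single i 1)
        = gradP (H α) (x t) (p t) i := fun i => rfl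
    simp only [hg1, hg2]
    rw [hW t α]
    have hcomm : ∑ i, gradP (H α) (x t) (p t) i * DQ (Pi.single j 1) i
        = ∑ i, DQ (Pi.single j 1) i * gradP (H α) (x t) (p t) i :=
      Finset.sum_congr rfl fun i _ => mul_comm _ _
    rw [hcomm]
    simp [Pi.neg_apply]
end
end
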